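/- arXiv:0907.2260 — 6 statements merged into one kernel-verified Lean document; each statement's English description precedes it below -/
import Mathlib

section
/- Let f be the diagonal matrix polynomial diag(X₁, X₂, X₁X₂+1) in ℝ[X₁,X₂]^{3×3}. Then f(x) is not negative semidefinite for any x ∈ ℝ², and yet there do not exist matrix polynomials pᵢ ∈ ℝ[X₁,X₂]^{3×3} such that ∑ᵢ pᵢ* f pᵢ − I is a sum of hermitian squares. -/
section Aux
open Polynomial

noncomputable section
namespace Ex5

/-- Sign of a univariate polynomial "just right of `c`": trailing coefficient of the
Taylor shift. -/
def tc (c : ℝ) (g : Polynomial ℝ) : ℝ := (g.comp (X + C c)).trailingCoeff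

lemma comp_linear_ne_zero {c : ℝ} {g : Polynomial ℝ} (hg : g ≠ 0) : g.comp (X + C c) ≠ 0 := by
  intro h
  have h2 : (g.comp (X + C c)).comp (X - C c) = g := by
    rw [comp_assoc]
    simp [add_comp, sub_comp]
  rw [h, zero_comp] at h2
  exact hg h2.symm

lemma tc_ne_zero {c : ℝ} {g : Polynomial ℝ} (hg : g ≠ 0) : tc c g ≠ 0 :=
  Polynomial.trailingCoeff_nonzero_iff_nonzero.mpr (comp_linear_ne_zero hg)

lemma tc_zero (c : ℝ) : tc c 0 = 0 := by simp [tc]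

lemma tc_mul (c : ℝ) (g h : Polynomial ℝ) : tc c (g * h) = tc c g * tc c h := by
  unfold tc; rw [mul_comp, trailingCoeff_mul]

lemma tc_C (c r : ℝ) : tc c (C r) = r := by
  unfold tc
  rw [C_comp]
  rcases eq_or_ne r 0 with h | h
  · simp [h]
  · rw [trailingCoeff, natTrailingDegree_C, coeff_C_zero]

lemma trailing_eq {P : Polynomial ℝ} {n : ℕ} (h1 : P.coeff n ≠ 0)
    (h2 : ∀ m < n, P.coeff m = 0) : P.trailingCoeff = P.coeff n := by
  have hP : P ≠ 0 := fun h => h1 (by simp [h])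
  have : P.natTrailingDegree = n :=
    le_antisymm (natTrailingDegree_le_of_ne_zero h1) (le_natTrailingDegree hP h2)
  rw [trailingCoeff, this]

lemma trailingCoeff_neg' (P : Polynomial ℝ) : (-P).trailingCoeff = -P.trailingCoeff := by
  rw [trailingCoeff, trailingCoeff, natTrailingDegree_neg, coeff_neg]

lemma tcoeff_add_pos {P Q : Polynomial ℝ} (hP : 0 < P.trailingCoeff)
    (hQ : 0 < Q.trailingCoeff) : 0 < (P + Q).trailingCoeff := by
  have hP0 : P ≠ 0 := by rintro rfl; simp at hP
  have hQ0 : Q ≠ 0 := by rintro rfl; simp at hQ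
  rcases lt_trichotomy P.natTrailingDegree Q.natTrailingDegree with h | h | h
  · have hc : (P + Q).coeff P.natTrailingDegree = P.trailingCoeff := by
      rw [coeff_add, coeff_eq_zero_of_lt_natTrailingDegree h, add_zero]; rfl
    have hlow : ∀ m < P.natTrailingDegree, (P + Q).coeff m = 0 := fun m hm => by
      rw [coeff_add, coeff_eq_zero_of_lt_natTrailingDegree hm,
        coeff_eq_zero_of_lt_natTrailingDegree (hm.trans h), add_zero]
    rw [trailing_eq (by rw [hc]; exact hP.ne') hlow, hc]; exact hP
  · have hc : (P + Q).coeff P.natTrailingDegree = P.trailingCoeff + Q.trailingCoeff := by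
      rw [coeff_add, trailingCoeff, trailingCoeff, h]
    have hlow : ∀ m < P.natTrailingDegree, (P + Q).coeff m = 0 := fun m hm => by
      rw [coeff_add, coeff_eq_zero_of_lt_natTrailingDegree hm,
        coeff_eq_zero_of_lt_natTrailingDegree (h ▸ hm), add_zero]
    rw [trailing_eq (by rw [hc]; positivity) hlow, hc]; positivity
  · have hc : (P + Q).coeff Q.natTrailingDegree = Q.trailingCoeff := by
      rw [coeff_add, coeff_eq_zero_of_lt_natTrailingDegree h, zero_add]; rfl
    have hlow : ∀ m < Q.natTrailingDegree, (P + Q).coeff m = 0 := fun m hm => by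
      rw [coeff_add, coeff_eq_zero_of_lt_natTrailingDegree hm,
        coeff_eq_zero_of_lt_natTrailingDegree (hm.trans h), zero_add]
    rw [trailing_eq (by rw [hc]; exact hQ.ne') hlow, hc]; exact hQ

lemma tc_add_pos {c : ℝ} {g h : Polynomial ℝ} (hg : 0 < tc c g) (hh : 0 < tc c h) :
    0 < tc c (g + h) := by
  unfold tc at *
  rw [add_comp]
  exact tcoeff_add_pos hg hh

lemma tc_neg_add_pos {c : ℝ} {g h : Polynomial ℝ} (hg : 0 < -tc c g) (hh : 0 < -tc c h) :
    0 < -tc c (g + h) := by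
  unfold tc at *
  rw [add_comp, ← trailingCoeff_neg', neg_add]
  exact tcoeff_add_pos (by rw [trailingCoeff_neg']; linarith) (by rw [trailingCoeff_neg']; linarith)

/-- The parity-twisted sign used for the semiordering. -/
def tsgn (m : ℤ) (g : Polynomial ℝ) : ℝ := if Even m then tc (-2) g else -(tc 1 g)

lemma tsgn_ne_zero {m : ℤ} {g : Polynomial ℝ} (h : 0 < tsgn m g) : g ≠ 0 := by
  rintro rfl
  unfold tsgn at h
  split_ifs at h <;> simp [tc_zero] at h

lemma tsgn_add {m : ℤ} {g h : Polynomial ℝ} (h1 : 0 < tsgn m g) (h2 : 0 < tsgn m h) :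
    0 < tsgn m (g + h) := by
  unfold tsgn at *
  split_ifs at * with he
  · exact tc_add_pos h1 h2
  · exact tc_neg_add_pos h1 h2

lemma tsgn_mul_sq {m k : ℤ} {g q : Polynomial ℝ} (h1 : 0 < tsgn m g) (hq : q ≠ 0) :
    0 < tsgn (m + (k + k)) (g * (q * q)) := by
  have hkk : Even (k + k) := ⟨k, rfl⟩
  have hpar : Even (m + (k + k)) ↔ Even m := by
    constructor
    · intro h; have := h.sub hkk; simpa using this
    · intro h; exact h.add hkk
  unfold tsgn at *
  by_cases he : Even m
  · rw [if_pos (he.add hkk), tc_mul, tc_mul]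
    rw [if_pos he] at h1
    exact mul_pos h1 (mul_self_pos.mpr (tc_ne_zero hq))
  · have hne : ¬ Even (m + (k + k)) := fun h => he (by simpa using h.sub hkk)
    rw [if_neg hne, tc_mul, tc_mul]
    rw [if_neg he] at h1
    have hpos : 0 < tc 1 q * tc 1 q := mul_self_pos.mpr (tc_ne_zero hq)
    nlinarith

/-! ### The Laurent algebra `ℝ[z][t,t⁻¹]` and the semiordering -/

abbrev AA : Type := AddMonoidAlgebra (Polynomial ℝ) ℤ

open scoped Classical in
/-- minimal degree (in `t`) of a Laurent polynomial -/
def mdeg (a : AA) : ℤ :=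
  if h : a = 0 then 0 else a.coeff.support.min' (Finsupp.support_nonempty_iff.2 (fun h' => h (AddMonoidAlgebra.coeff_eq_zero.1 h')))

lemma mdeg_mem {a : AA} (h : a ≠ 0) : mdeg a ∈ a.coeff.support := by
  rw [mdeg, dif_neg h]
  exact Finset.min'_mem _ _

lemma apply_lt_mdeg {a : AA} {n : ℤ} (h : n < mdeg a) : a.coeff n = 0 := by
  by_cases ha : a = 0
  · rw [ha]; rfl
  · rw [mdeg, dif_neg ha] at h
    by_contra hn
    exact absurd (Finset.min'_le _ _ (Finsupp.mem_support_iff.2 hn)) (not_le.2 h)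

lemma mdeg_eq {a : AA} {m : ℤ} (h1 : a.coeff m ≠ 0) (h2 : ∀ n < m, a.coeff n = 0) : mdeg a = m := by
  have ha : a ≠ 0 := fun h => h1 (by rw [h]; rfl)
  rw [mdeg, dif_neg ha]
  refine le_antisymm (Finset.min'_le _ _ (Finsupp.mem_support_iff.2 h1)) ?_
  by_contra hlt
  push_neg at hlt
  exact Finsupp.mem_support_iff.1 (Finset.min'_mem _ _) (h2 _ hlt)

lemma mul_structure {a b : AA} (ha : a ≠ 0) (hb : b ≠ 0) :
    (∀ n < mdeg a + mdeg b, (a * b).coeff n = 0) ∧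
      (a * b).coeff (mdeg a + mdeg b) = a.coeff (mdeg a) * b.coeff (mdeg b) := by
  have key : ∀ x : ℤ, (a * b).coeff x = ∑ a₁ ∈ a.coeff.support, a.coeff a₁ * b.coeff (x - a₁) := by
    intro x
    rw [AddMonoidAlgebra.mul_apply, Finsupp.sum]
    refine Finset.sum_congr rfl fun a₁ _ => ?_
    rw [Finsupp.sum]
    have : ∀ a₂ ∈ b.coeff.support, (if a₁ + a₂ = x then a.coeff a₁ * b.coeff a₂ else 0)
        = if a₂ = x - a₁ then a.coeff a₁ * b.coeff a₂ else 0 := by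
      intro a₂ _
      congr 1
      simp only [eq_iff_iff]
      omega
    rw [Finset.sum_congr rfl this, Finset.sum_ite_eq' b.coeff.support (x - a₁)
      (fun a₂ => a.coeff a₁ * b.coeff a₂)]
    split_ifs with h
    · rfl
    · rw [Finsupp.notMem_support_iff.1 h, mul_zero]
  constructor
  · intro n hn
    rw [key]
    refine Finset.sum_eq_zero fun a₁ h₁ => ?_
    have h2 : mdeg a ≤ a₁ := by
      rw [mdeg, dif_neg ha]; exact Finset.min'_le _ _ h₁
    rw [apply_lt_mdeg (a := b) (by omega), mul_zero]
  · rw [key]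
    rw [Finset.sum_eq_single (mdeg a)]
    · congr 1
      · congr 1
        omega
    · intro a₁ h₁ hne
      have h2 : mdeg a ≤ a₁ := by
        rw [mdeg, dif_neg ha]; exact Finset.min'_le _ _ h₁
      rw [apply_lt_mdeg (a := b) (by omega), mul_zero]
    · intro h
      exact absurd (mdeg_mem ha) h

/-- the semiordering's strict positivity predicate -/
def Pos (a : AA) : Prop := 0 < tsgn (mdeg a) (a.coeff (mdeg a))

lemma Pos.lc_ne_zero {a : AA} (h : Pos a) : a.coeff (mdeg a) ≠ 0 := tsgn_ne_zero h

lemma Pos.ne_zero {a : AA} (h : Pos a) : a ≠ 0 := fun h0 => h.lc_ne_zero (by rw [h0]; rfl)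

lemma Pos.add_of_lt {a b : AA} (h1 : Pos a) (h : mdeg a < mdeg b) : Pos (a + b) := by
  have hval : (a + b).coeff (mdeg a) = a.coeff (mdeg a) := by
    rw [AddMonoidAlgebra.coeff_add, Finsupp.add_apply, apply_lt_mdeg h, add_zero]
  have hm : mdeg (a + b) = mdeg a := by
    refine mdeg_eq (by rw [hval]; exact h1.lc_ne_zero) fun n hn => ?_
    rw [AddMonoidAlgebra.coeff_add, Finsupp.add_apply, apply_lt_mdeg hn, apply_lt_mdeg (hn.trans h), add_zero]
  unfold Pos
  rw [hm, hval]
  exact h1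

lemma Pos.add {a b : AA} (h1 : Pos a) (h2 : Pos b) : Pos (a + b) := by
  rcases lt_trichotomy (mdeg a) (mdeg b) with h | h | h
  · exact h1.add_of_lt h
  · have hsgn : 0 < tsgn (mdeg a) ((a + b).coeff (mdeg a)) := by
      rw [AddMonoidAlgebra.coeff_add, Finsupp.add_apply]
      exact tsgn_add h1 (by rw [h]; exact h2)
    have hm : mdeg (a + b) = mdeg a := by
      refine mdeg_eq (tsgn_ne_zero hsgn) fun n hn => ?_
      rw [AddMonoidAlgebra.coeff_add, Finsupp.add_apply, apply_lt_mdeg hn, apply_lt_mdeg (h ▸ hn), add_zero]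
    unfold Pos
    rw [hm]
    exact hsgn
  · rw [add_comm]
    exact h2.add_of_lt h

lemma sq_structure {b : AA} (hb : b ≠ 0) :
    b * b ≠ 0 ∧ mdeg (b * b) = mdeg b + mdeg b ∧
      (b * b).coeff (mdeg (b * b)) = b.coeff (mdeg b) * b.coeff (mdeg b) := by
  obtain ⟨hlow, hval⟩ := mul_structure hb hb
  have hlc : b.coeff (mdeg b) ≠ 0 := Finsupp.mem_support_iff.1 (mdeg_mem hb)
  have hne : (b * b).coeff (mdeg b + mdeg b) ≠ 0 := by rw [hval]; exact mul_ne_zero hlc hlc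
  have hm : mdeg (b * b) = mdeg b + mdeg b := mdeg_eq hne hlow
  exact ⟨fun h => hne (by rw [h]; rfl), hm, by rw [hm, hval]⟩

lemma Pos.sq {b : AA} (hb : b ≠ 0) : Pos (b * b) := by
  obtain ⟨-, hm, hval⟩ := sq_structure hb
  have hlc : b.coeff (mdeg b) ≠ 0 := Finsupp.mem_support_iff.1 (mdeg_mem hb)
  unfold Pos
  rw [hval, hm, tsgn]
  rw [if_pos ⟨mdeg b, rfl⟩, tc_mul]
  exact mul_self_pos.mpr (tc_ne_zero hlc)

lemma Pos.mul_sq {a b : AA} (h1 : Pos a) (hb : b ≠ 0) : Pos (a * (b * b)) := by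
  obtain ⟨hbb, hm, hval⟩ := sq_structure hb
  have hlc : b.coeff (mdeg b) ≠ 0 := Finsupp.mem_support_iff.1 (mdeg_mem hb)
  obtain ⟨hlow, hval2⟩ := mul_structure h1.ne_zero hbb
  have hne : (a * (b * b)).coeff (mdeg a + mdeg (b * b)) ≠ 0 := by
    rw [hval2, hval]
    exact mul_ne_zero h1.lc_ne_zero (mul_ne_zero hlc hlc)
  have hm2 : mdeg (a * (b * b)) = mdeg a + mdeg (b * b) := mdeg_eq hne hlow
  unfold Pos
  rw [hm2, hval2, hval, hm]
  exact tsgn_mul_sq h1 hlc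

/-- nonnegativity -/
def Nn (a : AA) : Prop := a = 0 ∨ Pos a

lemma Nn.add {a b : AA} (h1 : Nn a) (h2 : Nn b) : Nn (a + b) := by
  rcases h1 with rfl | h1
  · rwa [zero_add]
  rcases h2 with rfl | h2
  · rw [add_zero]; exact Or.inr h1
  exact Or.inr (h1.add h2)

lemma Nn_sum {ι : Type*} (s : Finset ι) (g : ι → AA) (h : ∀ i ∈ s, Nn (g i)) :
    Nn (∑ i ∈ s, g i) := by
  classical
  induction s using Finset.induction_on with
  | empty => exact Or.inl (by simp)
  | insert _ _ hni ih =>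
    rw [Finset.sum_insert hni]
    exact Nn.add (h _ (Finset.mem_insert_self _ _))
      (ih fun i hi => h i (Finset.mem_insert_of_mem hi))

lemma Nn_sq (b : AA) : Nn (b * b) := by
  rcases eq_or_ne b 0 with rfl | hb
  · exact Or.inl (by rw [mul_zero])
  · exact Or.inr (Pos.sq hb)

lemma Nn_mul_sq {a : AA} (h : Pos a) (b : AA) : Nn (a * (b * b)) := by
  rcases eq_or_ne b 0 with rfl | hb
  · exact Or.inl (by rw [mul_zero, mul_zero])
  · exact Or.inr (h.mul_sq hb)

lemma Pos_single {m : ℤ} {g : Polynomial ℝ} (hg : 0 < tsgn m g) :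
    Pos (AddMonoidAlgebra.single m g : AA) := by
  have hg0 : g ≠ 0 := tsgn_ne_zero hg
  have hm : mdeg (AddMonoidAlgebra.single m g : AA) = m :=
    mdeg_eq (by rw [AddMonoidAlgebra.coeff_single, Finsupp.single_eq_same]; exact hg0)
      (fun n hn => by rw [AddMonoidAlgebra.coeff_single]; exact Finsupp.single_eq_of_ne' (ne_of_gt hn))
  unfold Pos
  rw [hm, AddMonoidAlgebra.coeff_single, Finsupp.single_eq_same]
  exact hg

lemma not_Nn_neg_one : ¬ Nn (-1 : AA) := by
  have hone : (-1 : AA) = AddMonoidAlgebra.single 0 (-1 : Polynomial ℝ) := by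
    rw [AddMonoidAlgebra.single_neg]
    exact congrArg Neg.neg AddMonoidAlgebra.one_def
  rintro (h | h)
  · rw [hone] at h
    rw [AddMonoidAlgebra.single_eq_zero] at h
    norm_num at h
  · have hm : mdeg (-1 : AA) = 0 := by
      rw [hone]
      exact mdeg_eq (by rw [AddMonoidAlgebra.coeff_single, Finsupp.single_eq_same]; norm_num)
        (fun n hn => by rw [AddMonoidAlgebra.coeff_single]; exact Finsupp.single_eq_of_ne' (ne_of_gt hn))
    unfold Pos at h
    rw [hm, hone, AddMonoidAlgebra.coeff_single, Finsupp.single_eq_same, tsgn, if_pos Even.zero] at h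
    have : ((-1 : Polynomial ℝ)) = C (-1) := by simp
    rw [this, tc_C] at h
    norm_num at h

/-! ### generators -/

lemma tsgn_gen1 : 0 < tsgn 1 (-1 : Polynomial ℝ) := by
  rw [tsgn, if_neg (by decide)]
  have h : (-1 : Polynomial ℝ) = C (-1) := by simp
  rw [h, tc_C]; norm_num

lemma tsgn_gen2 : 0 < tsgn (-1) (-(X : Polynomial ℝ)) := by
  rw [tsgn, if_neg (by decide)]
  have h : tc 1 (-(X : Polynomial ℝ)) = -1 := by
    unfold tc
    rw [neg_comp, X_comp]
    rw [trailing_eq (n := 0) (by simp) (fun m hm => absurd hm (Nat.not_lt_zero m))]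
    simp
  rw [h]; norm_num

lemma tsgn_gen3 : 0 < tsgn 0 (-((X : Polynomial ℝ) + 1)) := by
  rw [tsgn, if_pos Even.zero]
  have h : tc (-2) (-((X : Polynomial ℝ) + 1)) = 1 := by
    unfold tc
    rw [neg_comp, add_comp, X_comp, one_comp]
    rw [trailing_eq (n := 0) (by simp; norm_num) (fun m hm => absurd hm (Nat.not_lt_zero m))]
    simp
    norm_num
  rw [h]; norm_num

/-! ### the substitution `X₀ ↦ t`, `X₁ ↦ z·t⁻¹` -/

def T1 : AA := AddMonoidAlgebra.single 1 1
def Y1 : AA := AddMonoidAlgebra.single (-1) Polynomial.X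

def ψ : MvPolynomial (Fin 2) ℝ →ₐ[ℝ] AA := MvPolynomial.aeval ![T1, Y1]

lemma ψ_X0 : ψ (MvPolynomial.X 0) = T1 := by
  rw [ψ, MvPolynomial.aeval_X]; rfl

lemma ψ_X1 : ψ (MvPolynomial.X 1) = Y1 := by
  rw [ψ, MvPolynomial.aeval_X]; rfl

lemma pos_gen1 : Pos (ψ (-(MvPolynomial.X 0))) := by
  rw [map_neg, ψ_X0, T1, ← AddMonoidAlgebra.single_neg]
  exact Pos_single tsgn_gen1

lemma pos_gen2 : Pos (ψ (-(MvPolynomial.X 1))) := by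
  rw [map_neg, ψ_X1, Y1, ← AddMonoidAlgebra.single_neg]
  exact Pos_single tsgn_gen2

lemma pos_gen3 : Pos (ψ (-(MvPolynomial.X 0 * MvPolynomial.X 1 + 1))) := by
  have h1 : T1 * Y1 = AddMonoidAlgebra.single 0 Polynomial.X := by
    rw [T1, Y1, AddMonoidAlgebra.single_mul_single]
    norm_num
  have h2 : ψ (-(MvPolynomial.X 0 * MvPolynomial.X 1 + 1))
      = AddMonoidAlgebra.single 0 (-(Polynomial.X + 1)) := by
    rw [map_neg, map_add, map_mul, map_one, ψ_X0, ψ_X1, h1,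
      show (1 : AA) = AddMonoidAlgebra.single 0 (1 : Polynomial ℝ) from AddMonoidAlgebra.one_def,
      ← AddMonoidAlgebra.single_add, ← AddMonoidAlgebra.single_neg]
  rw [h2]
  exact Pos_single tsgn_gen3

end Ex5
end
end Aux

open Matrix MvPolynomial

/-- Sum of hermitian squares in `ℝ[X₁,X₂]^{3×3}`. -/
def IsSOHS23 (A : Matrix (Fin 3) (Fin 3) (MvPolynomial (Fin 2) ℝ)) : Prop :=
  ∃ (N : ℕ) (B : Fin N → Matrix (Fin 3) (Fin 3) (MvPolynomial (Fin 2) ℝ)),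
    A = ∑ i, (B i)ᵀ * B i

/-- **Example 5.** The diagonal matrix polynomial `f = diag(X₁, X₂, X₁X₂+1)` is nowhere
negative semidefinite on `ℝ²`, yet no finite family `pᵢ` satisfies
`∑ᵢ pᵢᵀ f pᵢ − 1 ∈` sums of hermitian squares. -/
theorem stmt7 (f : Matrix (Fin 3) (Fin 3) (MvPolynomial (Fin 2) ℝ))
    (hfd : f = Matrix.diagonal ![X 0, X 1, X 0 * X 1 + 1]) :
    (∀ x : Fin 2 → ℝ, ¬ (-(f.map (MvPolynomial.eval x))).PosSemidef) ∧
      ¬ ∃ (N : ℕ) (p : Fin N → Matrix (Fin 3) (Fin 3) (MvPolynomial (Fin 2) ℝ)),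
          IsSOHS23 ((∑ i, (p i)ᵀ * f * p i) - 1) := by
  subst hfd
  constructor
  · intro x hx
    rw [Matrix.diagonal_map (by simp), Matrix.diagonal_neg,
      Matrix.posSemidef_diagonal_iff] at hx
    have h0 := hx 0
    have h1 := hx 1
    have h2 := hx 2
    simp at h0 h1 h2
    nlinarith
  · rintro ⟨N, p, M, B, hEq⟩
    set v : Fin 3 → MvPolynomial (Fin 2) ℝ := ![X 0, X 1, X 0 * X 1 + 1] with hv
    have entry : ∀ q : Matrix (Fin 3) (Fin 3) (MvPolynomial (Fin 2) ℝ),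
        (qᵀ * Matrix.diagonal v * q) 0 0 = ∑ k, v k * (q k 0 * q k 0) := by
      intro q
      rw [Matrix.mul_apply]
      refine Finset.sum_congr rfl fun j _ => ?_
      rw [Matrix.mul_diagonal, Matrix.transpose_apply]
      ring
    have hBB : ∀ b : Matrix (Fin 3) (Fin 3) (MvPolynomial (Fin 2) ℝ),
        (bᵀ * b) 0 0 = ∑ k, b k 0 * b k 0 := by
      intro b
      rw [Matrix.mul_apply]
      exact Finset.sum_congr rfl fun k _ => by rw [Matrix.transpose_apply]
    have h00 := congrFun (congrFun hEq 0) 0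
    rw [Matrix.sub_apply, Matrix.one_apply_eq, Matrix.sum_apply, Matrix.sum_apply] at h00
    simp only [entry, hBB] at h00
    have hkey : (-1 : MvPolynomial (Fin 2) ℝ)
        = (∑ j, ∑ k, B j k 0 * B j k 0) + ∑ i, ∑ k, (-(v k)) * (p i k 0 * p i k 0) := by
      have hneg : (∑ i, ∑ k, (-(v k)) * (p i k 0 * p i k 0))
          = -∑ i, ∑ k, v k * (p i k 0 * p i k 0) := by
        simp [neg_mul]
      rw [hneg, ← h00]
      ring
    have hN : Ex5.Nn (Ex5.ψ (-1)) := by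
      rw [hkey, _root_.map_add, _root_.map_sum, _root_.map_sum]
      refine Ex5.Nn.add (Ex5.Nn_sum _ _ fun j _ => ?_) (Ex5.Nn_sum _ _ fun i _ => ?_)
      · rw [_root_.map_sum]
        refine Ex5.Nn_sum _ _ fun k _ => ?_
        rw [_root_.map_mul]
        exact Ex5.Nn_sq _
      · rw [_root_.map_sum]
        refine Ex5.Nn_sum _ _ fun k _ => ?_
        rw [_root_.map_mul, _root_.map_mul]
        refine Ex5.Nn_mul_sq ?_ _
        fin_cases k
        · exact Ex5.pos_gen1
        · exact Ex5.pos_gen2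
        · exact Ex5.pos_gen3
    rw [_root_.map_neg, _root_.map_one] at hN
    exact Ex5.not_Nn_neg_one hN
end

section
/- Let 𝒜 be a ring with involution containing 1/2, and M ⊆ Sym 𝒜 a quadratic module. Then the set H_M(𝒜) = {a ∈ 𝒜 : ∃N ∈ ℕ, N − a*a ∈ M} is a subring of 𝒜 closed under the involution. -/
section VidavAux

variable {A : Type*} [Ring A]

/-- Conjugating `(n : A) - m` by `x`, with the cast pulled out front. -/
theorem vidav_L1 (n : ℕ) (x m y : A) :
    x * ((n:A) - m) * y = (n:A)*(x*y) - x*m*y := by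
  rw [mul_sub, sub_mul, ← (Nat.cast_commute n x).eq, mul_assoc]

/-- Square expansion with a natural cast, casts pulled left. -/
theorem vidav_L2 (n : ℕ) (y : A) :
    ((n:A) - y)*((n:A) - y) = (n:A)*(n:A) - (n:A)*y - (n:A)*y + y*y := by
  rw [sub_mul, mul_sub, mul_sub, ← (Nat.cast_commute n y).eq]; noncomm_ring

end VidavAux

/-- **Vidav's theorem.** Let `A` be a ring with involution containing `1/2` and
`M ⊆ Sym A` a quadratic module. Then the set of bounded elements
`H_M(A) = {a | ∃ N, N − a*a ∈ M}` is a subring of `A` closed under the involution. -/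
theorem stmt8 (A : Type*) [Ring A] [StarRing A]
    (half : A) (h2 : half + half = 1)
    (M : Set A)
    (hsym : ∀ m ∈ M, star m = m)
    (h1 : (1 : A) ∈ M)
    (hadd : ∀ m ∈ M, ∀ m' ∈ M, m + m' ∈ M)
    (hconj : ∀ m ∈ M, ∀ a : A, star a * m * a ∈ M) :
    (∃ S : Subring A, (S : Set A) = {a : A | ∃ N : ℕ, (N : A) - star a * a ∈ M}) ∧
      ∀ a : A, (∃ N : ℕ, (N : A) - star a * a ∈ M) →
        ∃ N : ℕ, (N : A) - star (star a) * star a ∈ M := by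
  -- basic consequences of the quadratic module axioms
  have hM0 : (0 : A) ∈ M := by simpa using hconj 1 h1 0
  have hMnat : ∀ n : ℕ, ((n : A)) ∈ M := by
    intro n
    induction n with
    | zero => simpa using hM0
    | succ k ih => push_cast; exact hadd _ ih _ h1
  have hsq : ∀ a : A, star a * a ∈ M := by
    intro a; simpa using hconj 1 h1 a
  have hsmulM : ∀ (n : ℕ), ∀ m ∈ M, (n : A) * m ∈ M := by
    intro n m hm
    induction n with
    | zero => simpa using hM0
    | succ k ih =>
      have : ((k : A) * m) + m ∈ M := hadd _ ih _ hm
      have e : ((k : A) * m) + m = ((k+1 : ℕ) : A) * m := by push_cast; noncomm_ring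
      rwa [e] at this
  have hmono : ∀ (x : A) (N K : ℕ), N ≤ K → (N : A) - x ∈ M → (K : A) - x ∈ M := by
    intro x N K hNK h
    have hmem : ((K - N : ℕ) : A) + ((N : A) - x) ∈ M := hadd _ (hMnat _) _ h
    have e : ((K - N : ℕ) : A) + ((N : A) - x) = (K : A) - x := by
      rw [Nat.cast_sub hNK]; abel
    rwa [e] at hmem
  -- properties of `half`
  have h2s : star half + star half = (1 : A) := by
    have := congrArg star h2
    rwa [star_add, star_one] at this
  have sstar : star half = half := by
    calc star half = star half * half + star half * half := by
          rw [← mul_add, h2, mul_one]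
      _ = half := by rw [← add_mul, h2s, one_mul]
  have hc : ∀ a : A, half * a = a * half := by
    intro a
    have e : half * (a * half + a * half) = (half * a + half * a) * half := by
      noncomm_ring
    rw [← mul_add a, h2, mul_one] at e
    rw [← add_mul, h2, one_mul] at e
    exact e
  -- division by four
  have hdiv4 : ∀ m : A, ((4:ℕ) : A) * m ∈ M → m ∈ M := by
    intro m hm
    have hcj := hconj _ hm half
    rw [sstar] at hcj
    have e : half * (((4:ℕ):A) * m) * half = m := by
      have e1 : half * (((4:ℕ):A) * m) * half = ((4:ℕ):A) * (m * (half * half)) := by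
        rw [← mul_assoc, ← (Nat.cast_commute 4 half).eq, mul_assoc, mul_assoc,
          ← mul_assoc half m, hc m, mul_assoc]
      have e2 : ((4:ℕ):A) * (m * (half * half)) = m * ((half + half) * (half + half)) := by
        push_cast; noncomm_ring
      rw [e1, e2, h2, one_mul, mul_one]
    rwa [e] at hcj
  have hdivpow : ∀ (k : ℕ) (m : A), ((4^k : ℕ) : A) * m ∈ M → m ∈ M := by
    intro k
    induction k with
    | zero => intro m hm; simpa using hm
    | succ n ih =>
      intro m hm
      apply ih
      apply hdiv4
      have e : ((4:ℕ):A) * (((4^n:ℕ):A) * m) = ((4^(n+1):ℕ):A) * m := by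
        push_cast; rw [pow_succ]; noncomm_ring
      rwa [e]
  -- star closedness of the bounded set
  have hstarcl : ∀ a : A, (∃ N : ℕ, (N : A) - star a * a ∈ M) →
      ∃ N : ℕ, (N : A) - a * star a ∈ M := by
    rintro a ⟨N₀, h⟩
    set k := N₀ with hk
    have hle : N₀ ≤ 4 ^ k := le_of_lt (Nat.lt_pow_self (by norm_num))
    set N : ℕ := 4 ^ k with hN
    have h' : (N : A) - star a * a ∈ M := hmono _ N₀ N hle h
    have m1 : a * ((N : A) - star a * a) * star a ∈ M := by
      have := hconj _ h' (star a)
      rwa [star_star] at this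
    rw [vidav_L1] at m1
    have m2 : ((N : A) - a * star a) * ((N : A) - a * star a) ∈ M := by
      have := hsq ((N : A) - a * star a)
      rwa [star_sub, star_mul, star_star, star_natCast] at this
    rw [vidav_L2] at m2
    have msum := hadd _ m2 _ m1
    have e : ((N:A)*(N:A) - (N:A)*(a*star a) - (N:A)*(a*star a) + (a*star a)*(a*star a))
        + ((N:A)*(a*star a) - a*(star a*a)*star a)
        = (N : A) * ((N:A) - a * star a) := by noncomm_ring
    rw [e] at msum
    exact ⟨N, hdivpow k _ msum⟩
  refine ⟨⟨{ carrier := {a : A | ∃ N : ℕ, (N : A) - star a * a ∈ M}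
             zero_mem' := ⟨1, by simpa using h1⟩
             one_mem' := ⟨1, by simpa using hM0⟩
             neg_mem' := by
               rintro a ⟨N, hN⟩
               exact ⟨N, by simpa using hN⟩
             add_mem' := by
               rintro a b ⟨Na, ha⟩ ⟨Nb, hb⟩
               refine ⟨2*(Na+Nb), ?_⟩
               have msum := hadd _ (hsq (a - b)) _
                 (hadd _ (hadd _ ha _ ha) _ (hadd _ hb _ hb))
               have e : star (a-b) * (a-b)
                   + (((Na:A) - star a * a) + ((Na:A) - star a * a)
                     + (((Nb:A) - star b * b) + ((Nb:A) - star b * b)))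
                   = ((2*(Na+Nb) : ℕ) : A) - star (a+b) * (a+b) := by
                 push_cast
                 rw [star_sub, star_add]
                 noncomm_ring
               rwa [e] at msum
             mul_mem' := by
               rintro a b ⟨Na, ha⟩ ⟨Nb, hb⟩
               refine ⟨Na*Nb, ?_⟩
               have m1 : star b * ((Na:A) - star a * a) * b ∈ M := hconj _ ha b
               rw [vidav_L1] at m1
               have m2 : (Na : A) * ((Nb:A) - star b * b) ∈ M := hsmulM Na _ hb
               have msum := hadd _ m1 _ m2
               have e : ((Na:A)*(star b * b) - star b * (star a * a) * b)
                   + ((Na:A) * ((Nb:A) - star b * b))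
                   = ((Na*Nb : ℕ) : A) - star (a*b) * (a*b) := by
                 push_cast
                 rw [star_mul]
                 noncomm_ring
               rwa [e] at msum }, rfl⟩, ?_⟩
  intro a ha
  obtain ⟨N, hN⟩ := hstarcl a ha
  exact ⟨N, by rwa [star_star]⟩
end

section
/- A quadratic module M ⊆ Sym ℝ[X₁,…,Xₙ]^{t×t} is archimedean if and only if there exists N ∈ ℕ such that (N − ∑ᵢ Xᵢ²)·I ∈ M. -/
open Matrix MvPolynomial

section Key
variable {n t : ℕ}
local notation "R" => MvPolynomial (Fin n) ℝ
local notation "Mat" => Matrix (Fin t) (Fin t) (MvPolynomial (Fin n) ℝ)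

theorem std_tr (i j : Fin t) (c : R) : (Matrix.single i j c)ᵀ = Matrix.single j i c := by
  apply Matrix.ext
  intro a b
  simp [Matrix.single, and_comm]

theorem std_sum {ι : Type*} (s : Finset ι) (i j : Fin t) (f : ι → R) :
    Matrix.single i j (∑ x ∈ s, f x) = ∑ x ∈ s, Matrix.single i j (f x) := by
  apply Matrix.ext
  intro a b
  by_cases h : a = i ∧ b = j
  · simp [Matrix.single, h, Matrix.sum_apply]
  · rw [not_and_or] at h
    rcases h with h | h <;> simp [Matrix.single, h, Matrix.sum_apply]

theorem diag_sum (c : R) : ∑ k : Fin t, Matrix.single k k c = c • (1 : Mat) := by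
  apply Matrix.ext
  intro a b
  by_cases h : a = b
  · subst h; simp [Matrix.single, Matrix.sum_apply, Matrix.one_apply]
  · simp only [Matrix.sum_apply, Matrix.smul_apply, Matrix.one_apply, Matrix.single,
      Matrix.of_apply, if_neg h, smul_zero]
    apply Finset.sum_eq_zero
    intro x _
    rw [if_neg]
    rintro ⟨rfl, rfl⟩
    exact h rfl

theorem sum_std (m : Mat) : ∑ j : Fin t, ∑ k : Fin t, Matrix.single j k (m j k) = m :=
  (matrix_eq_sum_single m).symm

theorem sum_std_tr (m : Mat) :
    ∑ j : Fin t, ∑ k : Fin t, Matrix.single k j (m j k) = mᵀ := by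
  rw [Finset.sum_comm]
  exact (matrix_eq_sum_single mᵀ).symm

theorem sum3_comm (f : Fin t → Fin t → Fin t → Mat) :
    ∑ i : Fin t, ∑ j : Fin t, ∑ k : Fin t, f i j k
      = ∑ j : Fin t, ∑ k : Fin t, ∑ i : Fin t, f i j k := by
  rw [Finset.sum_comm]
  exact Finset.sum_congr rfl fun _ _ => Finset.sum_comm

theorem key_identity (a : Mat) :
    ∑ i : Fin t, ∑ j : Fin t, ∑ k : Fin t,
      (Matrix.single i k (a i j) - Matrix.single i j (a i k))ᵀ *
      (Matrix.single i k (a i j) - Matrix.single i j (a i k)) =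
    (2 : R) • ((∑ i : Fin t, ∑ j : Fin t, (a i j) * (a i j)) • (1 : Mat) - aᵀ * a) := by
  have expand : ∀ i j k : Fin t,
      (Matrix.single i k (a i j) - Matrix.single i j (a i k))ᵀ *
      (Matrix.single i k (a i j) - Matrix.single i j (a i k)) =
      (Matrix.single k k (a i j * a i j) - Matrix.single k j (a i j * a i k))
        - (Matrix.single j k (a i k * a i j) - Matrix.single j j (a i k * a i k)) := by
    intro i j k
    rw [transpose_sub, std_tr, std_tr, sub_mul, mul_sub, mul_sub,
      single_mul_single_same, single_mul_single_same, single_mul_single_same,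
      single_mul_single_same]
  simp only [expand, Finset.sum_sub_distrib]
  have t1 : ∑ i : Fin t, ∑ j : Fin t, ∑ k : Fin t, Matrix.single k k (a i j * a i j)
      = (∑ i : Fin t, ∑ j : Fin t, (a i j) * (a i j)) • (1 : Mat) := by
    simp only [diag_sum, ← Finset.sum_smul]
  have t2 : ∑ i : Fin t, ∑ j : Fin t, ∑ k : Fin t, Matrix.single k j (a i j * a i k)
      = aᵀ * a := by
    rw [sum3_comm]
    have : ∀ j k : Fin t, ∑ i : Fin t, Matrix.single k j (a i j * a i k)
        = Matrix.single k j ((aᵀ * a) j k) := by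
      intro j k
      rw [← std_sum]
      congr 1
    simp only [this]
    rw [sum_std_tr, transpose_mul, transpose_transpose]
  have t3 : ∑ i : Fin t, ∑ j : Fin t, ∑ k : Fin t, Matrix.single j k (a i k * a i j)
      = aᵀ * a := by
    rw [sum3_comm]
    have : ∀ j k : Fin t, ∑ i : Fin t, Matrix.single j k (a i k * a i j)
        = Matrix.single j k ((aᵀ * a) k j) := by
      intro j k
      rw [← std_sum]
      congr 1
    simp only [this]
    have h4 : ∑ j : Fin t, ∑ k : Fin t, Matrix.single j k ((aᵀ * a) k j)
        = (aᵀ * a)ᵀ := by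
      exact Finset.sum_comm.trans (sum_std_tr (aᵀ * a))
    rw [h4, transpose_mul, transpose_transpose]
  have t4 : ∑ i : Fin t, ∑ j : Fin t, ∑ k : Fin t, Matrix.single j j (a i k * a i k)
      = (∑ i : Fin t, ∑ j : Fin t, (a i j) * (a i j)) • (1 : Mat) := by
    have : ∀ i j : Fin t, ∑ k : Fin t, Matrix.single j j (a i k * a i k)
        = Matrix.single j j (∑ k : Fin t, a i k * a i k) := by
      intro i j; rw [std_sum]
    simp only [this, diag_sum, ← Finset.sum_smul]
  rw [t1, t2, t3, t4]
  rw [two_smul]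
  abel
end Key

section Bdd
variable {n t : ℕ}
local notation "R" => MvPolynomial (Fin n) ℝ
local notation "Mat" => Matrix (Fin t) (Fin t) (MvPolynomial (Fin n) ℝ)
variable {M : Set (Matrix (Fin t) (Fin t) (MvPolynomial (Fin n) ℝ))}

theorem aux_sq_smul' (hconj : ∀ m ∈ M, ∀ p : Mat, pᵀ * m * p ∈ M)
    (f : MvPolynomial (Fin n) ℝ) (m : Mat) (hm : m ∈ M) :
    (f ^ 2) • m ∈ M := by
  have := hconj m hm (f • (1 : Mat))
  have he : (f • (1 : Mat))ᵀ * m * (f • (1 : Mat)) = (f ^ 2) • m := by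
    rw [transpose_smul, transpose_one]
    rw [Matrix.smul_mul, Matrix.one_mul, Matrix.mul_smul, Matrix.mul_one, smul_smul, sq]
  rwa [he] at this

theorem aux_const_smul' (hconj : ∀ m ∈ M, ∀ p : Mat, pᵀ * m * p ∈ M)
    (c : ℝ) (hc : 0 ≤ c) (m : Mat) (hm : m ∈ M) :
    (C c : MvPolynomial (Fin n) ℝ) • m ∈ M := by
  have := aux_sq_smul' hconj (C (Real.sqrt c)) m hm
  rwa [← map_pow, Real.sq_sqrt hc] at this

theorem aux_zero (h1 : (1 : Mat) ∈ M) (hconj : ∀ m ∈ M, ∀ p : Mat, pᵀ * m * p ∈ M) :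
    (0 : Mat) ∈ M := by
  have := aux_const_smul' hconj 0 le_rfl 1 h1
  simpa using this

theorem aux_sum (h1 : (1 : Mat) ∈ M) (hadd : ∀ m ∈ M, ∀ m' ∈ M, m + m' ∈ M)
    (hconj : ∀ m ∈ M, ∀ p : Mat, pᵀ * m * p ∈ M)
    {ι : Type*} (s : Finset ι) (f : ι → Mat)
    (hf : ∀ i ∈ s, f i ∈ M) : ∑ i ∈ s, f i ∈ M := by
  classical
  induction s using Finset.induction with
  | empty => simpa using aux_zero h1 hconj
  | insert _ _ hx ih =>
    rw [Finset.sum_insert hx]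
    exact hadd _ (hf _ (Finset.mem_insert_self _ _)) _
      (ih fun i hi => hf i (Finset.mem_insert_of_mem hi))

/-- bounded elements -/
def Bdd (M : Set (Matrix (Fin t) (Fin t) (MvPolynomial (Fin n) ℝ)))
    (f : MvPolynomial (Fin n) ℝ) : Prop :=
  ∃ N : ℕ, (((N : R) - f) • (1 : Mat)) ∈ M ∧ (((N : R) + f) • (1 : Mat)) ∈ M

theorem b_const (hconj : ∀ m ∈ M, ∀ p : Mat, pᵀ * m * p ∈ M) (h1 : (1 : Mat) ∈ M)
    (c : ℝ) : Bdd M (C c) := by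
  refine ⟨⌈|c|⌉₊, ?_, ?_⟩
  · have he : ((⌈|c|⌉₊ : R) - C c) = C ((⌈|c|⌉₊ : ℝ) - c) := by rw [map_sub, map_natCast]
    rw [he]
    exact aux_const_smul' hconj _
      (sub_nonneg.mpr ((le_abs_self c).trans (Nat.le_ceil _))) 1 h1
  · have he : ((⌈|c|⌉₊ : R) + C c) = C ((⌈|c|⌉₊ : ℝ) + c) := by rw [map_add, map_natCast]
    rw [he]
    refine aux_const_smul' hconj _ ?_ 1 h1
    have h1' : -c ≤ |c| := neg_le_abs c
    have h2' : |c| ≤ (⌈|c|⌉₊ : ℝ) := Nat.le_ceil _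
    linarith

theorem b_add (hadd : ∀ m ∈ M, ∀ m' ∈ M, m + m' ∈ M) {f g : MvPolynomial (Fin n) ℝ}
    (hf : Bdd M f) (hg : Bdd M g) : Bdd M (f + g) := by
  obtain ⟨N, hf1, hf2⟩ := hf
  obtain ⟨N', hg1, hg2⟩ := hg
  refine ⟨N + N', ?_, ?_⟩
  · have : (((N + N' : ℕ) : R) - (f + g)) • (1 : Mat)
        = ((N : R) - f) • (1 : Mat) + ((N' : R) - g) • (1 : Mat) := by
      rw [← add_smul]; congr 1; push_cast; ring
    rw [this]; exact hadd _ hf1 _ hg1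
  · have : (((N + N' : ℕ) : R) + (f + g)) • (1 : Mat)
        = ((N : R) + f) • (1 : Mat) + ((N' : R) + g) • (1 : Mat) := by
      rw [← add_smul]; congr 1; push_cast; ring
    rw [this]; exact hadd _ hf2 _ hg2

theorem b_neg {f : MvPolynomial (Fin n) ℝ} (hf : Bdd M f) : Bdd M (-f) := by
  obtain ⟨N, hf1, hf2⟩ := hf
  exact ⟨N, by rwa [sub_neg_eq_add], by rwa [← sub_eq_add_neg]⟩

theorem b_sq_upper (h1 : (1 : Mat) ∈ M) (hadd : ∀ m ∈ M, ∀ m' ∈ M, m + m' ∈ M)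
    (hconj : ∀ m ∈ M, ∀ p : Mat, pᵀ * m * p ∈ M)
    {f : MvPolynomial (Fin n) ℝ} (hf : Bdd M f) :
    ∃ K : ℕ, (((K : R) - f ^ 2) • (1 : Mat)) ∈ M := by
  obtain ⟨N₀, hf1, hf2⟩ := hf
  -- bump to N := N₀ + 1 ≥ 1
  set N := N₀ + 1 with hNdef
  have one_smul_mem : ((1 : R)) • (1 : Mat) ∈ M := by rw [one_smul]; exact h1
  have hm : (((N : R) - f) • (1 : Mat)) ∈ M := by
    have : ((N : R) - f) • (1 : Mat)
        = ((N₀ : R) - f) • (1 : Mat) + (1 : R) • (1 : Mat) := by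
      rw [← add_smul]; congr 1; push_cast [hNdef]; ring
    rw [this]; exact hadd _ hf1 _ one_smul_mem
  have hp : (((N : R) + f) • (1 : Mat)) ∈ M := by
    have : ((N : R) + f) • (1 : Mat)
        = ((N₀ : R) + f) • (1 : Mat) + (1 : R) • (1 : Mat) := by
      rw [← add_smul]; congr 1; push_cast [hNdef]; ring
    rw [this]; exact hadd _ hf2 _ one_smul_mem
  have h2 := aux_sq_smul' hconj ((N : R) + f) _ hm
  have h3 := aux_sq_smul' hconj ((N : R) - f) _ hp
  have hsum := hadd _ h2 _ h3
  rw [smul_smul, smul_smul, ← add_smul] at hsum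
  have hid : ((N : R) + f) ^ 2 * ((N : R) - f) + ((N : R) - f) ^ 2 * ((N : R) + f)
      = ((2 * N : ℕ) : R) * (((N ^ 2 : ℕ) : R) - f ^ 2) := by
    push_cast
    ring
  rw [hid] at hsum
  refine ⟨N ^ 2, ?_⟩
  have hpos : (0 : ℝ) < ((2 * N : ℕ) : ℝ) := by
    exact_mod_cast (by omega : 0 < 2 * N)
  have hfin := aux_const_smul' hconj (((2 * N : ℕ) : ℝ))⁻¹ (le_of_lt (inv_pos.mpr hpos)) _ hsum
  rw [smul_smul, ← mul_assoc] at hfin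
  have hc : (C (((2 * N : ℕ) : ℝ))⁻¹ : R) * ((2 * N : ℕ) : R) = 1 := by
    rw [← map_natCast (C : ℝ →+* R), ← _root_.map_mul,
      inv_mul_cancel₀ (ne_of_gt hpos), C_1]
  rw [hc, one_mul] at hfin
  exact hfin

theorem b_sq (h1 : (1 : Mat) ∈ M) (hadd : ∀ m ∈ M, ∀ m' ∈ M, m + m' ∈ M)
    (hconj : ∀ m ∈ M, ∀ p : Mat, pᵀ * m * p ∈ M)
    {f : MvPolynomial (Fin n) ℝ} (hf : Bdd M f) : Bdd M (f ^ 2) := by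
  obtain ⟨K, hK⟩ := b_sq_upper h1 hadd hconj hf
  refine ⟨K, hK, ?_⟩
  have hsq : (f ^ 2) • (1 : Mat) ∈ M := aux_sq_smul' hconj f 1 h1
  have hKc : ((K : R)) • (1 : Mat) ∈ M := by
    have := aux_const_smul' hconj ((K : ℝ)) (Nat.cast_nonneg K) 1 h1
    rwa [map_natCast] at this
  have : ((K : R) + f ^ 2) • (1 : Mat) = (K : R) • (1 : Mat) + (f ^ 2) • (1 : Mat) := by
    rw [add_smul]
  rw [this]
  exact hadd _ hKc _ hsq

theorem b_smul_aux (h1 : (1 : Mat) ∈ M) (hadd : ∀ m ∈ M, ∀ m' ∈ M, m + m' ∈ M)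
    (hconj : ∀ m ∈ M, ∀ p : Mat, pᵀ * m * p ∈ M)
    {c : ℝ} (hc : 0 ≤ c) {g : MvPolynomial (Fin n) ℝ} {N : ℕ}
    (hg : (((N : R) + g) • (1 : Mat)) ∈ M) :
    (((⌈c * N⌉₊ : R) + C c * g) • (1 : Mat)) ∈ M := by
  have hd0 : (0 : ℝ) ≤ ⌈c * N⌉₊ - c * N := sub_nonneg.mpr (Nat.le_ceil _)
  have hcst : (C ((⌈c * N⌉₊ : ℝ) - c * N) : R) • (1 : Mat) ∈ M :=
    aux_const_smul' hconj _ hd0 1 h1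
  have hterm : (C c : R) • (((N : R) + g) • (1 : Mat)) ∈ M :=
    aux_const_smul' hconj c hc _ hg
  have hmem := hadd _ hcst _ hterm
  rw [smul_smul, ← add_smul] at hmem
  have he : C ((⌈c * N⌉₊ : ℝ) - c * N) + C c * ((N : R) + g)
      = ((⌈c * N⌉₊ : R) + C c * g) := by
    rw [map_sub, _root_.map_mul, map_natCast, map_natCast]
    ring
  rwa [he] at hmem

theorem b_smul (h1 : (1 : Mat) ∈ M) (hadd : ∀ m ∈ M, ∀ m' ∈ M, m + m' ∈ M)
    (hconj : ∀ m ∈ M, ∀ p : Mat, pᵀ * m * p ∈ M)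
    (c : ℝ) {f : MvPolynomial (Fin n) ℝ} (hf : Bdd M f) : Bdd M (C c * f) := by
  obtain ⟨N, hm, hp⟩ := hf
  have habs : (0 : ℝ) ≤ |c| := abs_nonneg c
  have hm' : (((N : R) + (-f)) • (1 : Mat)) ∈ M := by rwa [← sub_eq_add_neg]
  refine ⟨⌈|c| * N⌉₊, ?_, ?_⟩
  · rcases le_or_gt 0 c with hc | hc
    · have := b_smul_aux h1 hadd hconj habs (g := -f) hm'
      have he : ((⌈|c| * N⌉₊ : R) + C |c| * (-f)) = ((⌈|c| * N⌉₊ : R) - C c * f) := by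
        rw [abs_of_nonneg hc]; ring
      rwa [he] at this
    · have := b_smul_aux h1 hadd hconj habs (g := f) hp
      have he : ((⌈|c| * N⌉₊ : R) + C |c| * f) = ((⌈|c| * N⌉₊ : R) - C c * f) := by
        rw [abs_of_neg hc, map_neg]; ring
      rwa [he] at this
  · rcases le_or_gt 0 c with hc | hc
    · have := b_smul_aux h1 hadd hconj habs (g := f) hp
      have he : ((⌈|c| * N⌉₊ : R) + C |c| * f) = ((⌈|c| * N⌉₊ : R) + C c * f) := by
        rw [abs_of_nonneg hc]
      rwa [he] at this
    · have := b_smul_aux h1 hadd hconj habs (g := -f) hm'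
      have he : ((⌈|c| * N⌉₊ : R) + C |c| * (-f)) = ((⌈|c| * N⌉₊ : R) + C c * f) := by
        rw [abs_of_neg hc, map_neg]; ring
      rwa [he] at this

theorem b_sub (hadd : ∀ m ∈ M, ∀ m' ∈ M, m + m' ∈ M) {f g : MvPolynomial (Fin n) ℝ}
    (hf : Bdd M f) (hg : Bdd M g) : Bdd M (f - g) := by
  have := b_add hadd hf (b_neg hg)
  rwa [← sub_eq_add_neg] at this

theorem b_mul (h1 : (1 : Mat) ∈ M) (hadd : ∀ m ∈ M, ∀ m' ∈ M, m + m' ∈ M)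
    (hconj : ∀ m ∈ M, ∀ p : Mat, pᵀ * m * p ∈ M)
    {f g : MvPolynomial (Fin n) ℝ} (hf : Bdd M f) (hg : Bdd M g) : Bdd M (f * g) := by
  have h2 : Bdd M ((f + g) ^ 2) := b_sq h1 hadd hconj (b_add hadd hf hg)
  have h3 : Bdd M ((f - g) ^ 2) := b_sq h1 hadd hconj (b_sub hadd hf hg)
  have h4 : Bdd M (C (4⁻¹ : ℝ) * ((f + g) ^ 2 - (f - g) ^ 2)) :=
    b_smul h1 hadd hconj _ (b_sub hadd h2 h3)
  have he : C (4⁻¹ : ℝ) * ((f + g) ^ 2 - (f - g) ^ 2) = f * g := by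
    have : (f + g) ^ 2 - (f - g) ^ 2 = (C (4 : ℝ) : R) * (f * g) := by
      rw [map_ofNat]; ring
    rw [this, ← mul_assoc, ← _root_.map_mul (C : ℝ →+* R)]
    norm_num
  rwa [he] at h4

theorem b_X (h1 : (1 : Mat) ∈ M) (hadd : ∀ m ∈ M, ∀ m' ∈ M, m + m' ∈ M)
    (hconj : ∀ m ∈ M, ∀ p : Mat, pᵀ * m * p ∈ M)
    {N : ℕ} (hN : (((N : R) - ∑ i : Fin n, X i ^ 2) • (1 : Mat)) ∈ M)
    (i : Fin n) : Bdd M (X i : MvPolynomial (Fin n) ℝ) := by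
  -- first: (N - X i ^ 2) • 1 ∈ M
  have hrest : ((∑ j ∈ Finset.univ.erase i, (X j : R) ^ 2) • (1 : Mat)) ∈ M := by
    rw [Finset.sum_smul]
    refine aux_sum h1 hadd hconj _ _ fun j _ => ?_
    exact aux_sq_smul' hconj (X j) 1 h1
  have hXi : (((N : R) - X i ^ 2) • (1 : Mat)) ∈ M := by
    have hmem := hadd _ hN _ hrest
    rw [← add_smul] at hmem
    have he : ((N : R) - ∑ j : Fin n, X j ^ 2) + ∑ j ∈ Finset.univ.erase i, (X j : R) ^ 2
        = (N : R) - X i ^ 2 := by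
      rw [← Finset.add_sum_erase _ _ (Finset.mem_univ i)]
      ring
    rwa [he] at hmem
  -- squares (X i ± 1)^2
  have hsqp : (((X i : R) + 1) ^ 2) • (1 : Mat) ∈ M := aux_sq_smul' hconj _ 1 h1
  have hsqm : (((X i : R) - 1) ^ 2) • (1 : Mat) ∈ M := aux_sq_smul' hconj _ 1 h1
  have h2p : ((((N + 1 : ℕ) : R) + (2 : R) * X i) • (1 : Mat)) ∈ M := by
    have hmem := hadd _ hXi _ hsqp
    rw [← add_smul] at hmem
    have he : ((N : R) - X i ^ 2) + ((X i : R) + 1) ^ 2 = ((N + 1 : ℕ) : R) + (2 : R) * X i := by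
      push_cast; ring
    rwa [he] at hmem
  have h2m : ((((N + 1 : ℕ) : R) - (2 : R) * X i) • (1 : Mat)) ∈ M := by
    have hmem := hadd _ hXi _ hsqm
    rw [← add_smul] at hmem
    have he : ((N : R) - X i ^ 2) + ((X i : R) - 1) ^ 2 = ((N + 1 : ℕ) : R) - (2 : R) * X i := by
      push_cast; ring
    rwa [he] at hmem
  have hb2 : Bdd M ((2 : R) * X i) := ⟨N + 1, h2m, h2p⟩
  have := b_smul h1 hadd hconj (2⁻¹ : ℝ) hb2
  have he : C (2⁻¹ : ℝ) * ((2 : R) * X i) = X i := by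
    rw [← mul_assoc]
    have : (C (2⁻¹ : ℝ) : R) * 2 = 1 := by
      rw [← map_ofNat (C : ℝ →+* R) 2, ← _root_.map_mul]
      norm_num
    rw [this, one_mul]
  rwa [he] at this

theorem b_all (h1 : (1 : Mat) ∈ M) (hadd : ∀ m ∈ M, ∀ m' ∈ M, m + m' ∈ M)
    (hconj : ∀ m ∈ M, ∀ p : Mat, pᵀ * m * p ∈ M)
    {N : ℕ} (hN : (((N : R) - ∑ i : Fin n, X i ^ 2) • (1 : Mat)) ∈ M)
    (f : MvPolynomial (Fin n) ℝ) : Bdd M f := by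
  induction f using MvPolynomial.induction_on with
  | C c => exact b_const hconj h1 c
  | add p q hp hq => exact b_add hadd hp hq
  | mul_X p i hp => exact b_mul h1 hadd hconj hp (b_X h1 hadd hconj hN i)

end Bdd

section Main
variable {n t : ℕ}
local notation "R" => MvPolynomial (Fin n) ℝ
local notation "Mat" => Matrix (Fin t) (Fin t) (MvPolynomial (Fin n) ℝ)
variable {M : Set (Matrix (Fin t) (Fin t) (MvPolynomial (Fin n) ℝ))}

theorem natCast_eq_smul_one (N : ℕ) : (N : Mat) = (N : R) • (1 : Mat) := by
  rw [Nat.cast_smul_eq_nsmul, nsmul_eq_mul, mul_one]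

end Main

/-- **Lemma 7.** A quadratic module `M` of symmetric matrix polynomials is archimedean
(every `a` satisfies `N·I − aᵀa ∈ M` for some `N ∈ ℕ`) if and only if
`(N − ∑ᵢ Xᵢ²)·I ∈ M` for some `N ∈ ℕ`. -/
theorem stmt9 (n t : ℕ)
    (M : Set (Matrix (Fin t) (Fin t) (MvPolynomial (Fin n) ℝ)))
    (hsym : ∀ m ∈ M, mᵀ = m)
    (h1 : (1 : Matrix (Fin t) (Fin t) (MvPolynomial (Fin n) ℝ)) ∈ M)
    (hadd : ∀ m ∈ M, ∀ m' ∈ M, m + m' ∈ M)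
    (hconj : ∀ m ∈ M, ∀ p : Matrix (Fin t) (Fin t) (MvPolynomial (Fin n) ℝ),
      pᵀ * m * p ∈ M) :
    (∀ a : Matrix (Fin t) (Fin t) (MvPolynomial (Fin n) ℝ),
        ∃ N : ℕ, (N : Matrix (Fin t) (Fin t) (MvPolynomial (Fin n) ℝ)) - aᵀ * a ∈ M) ↔
      ∃ N : ℕ,
        (((N : MvPolynomial (Fin n) ℝ) - ∑ i, X i ^ 2) •
          (1 : Matrix (Fin t) (Fin t) (MvPolynomial (Fin n) ℝ))) ∈ M := by
  constructor
  · intro h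
    choose Nf hNf using fun i : Fin n => h ((X i : MvPolynomial (Fin n) ℝ) • (1 : Matrix (Fin t) (Fin t) (MvPolynomial (Fin n) ℝ)))
    refine ⟨∑ i, Nf i, ?_⟩
    have he : (((∑ i, Nf i : ℕ) : MvPolynomial (Fin n) ℝ) - ∑ i, (X i : MvPolynomial (Fin n) ℝ) ^ 2)
          • (1 : Matrix (Fin t) (Fin t) (MvPolynomial (Fin n) ℝ))
        = ∑ i : Fin n, (((Nf i : MvPolynomial (Fin n) ℝ) - X i ^ 2) • (1 : Matrix (Fin t) (Fin t) (MvPolynomial (Fin n) ℝ))) := by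
      rw [← Finset.sum_smul]
      congr 1
      simp only [Nat.cast_sum, Finset.sum_sub_distrib]
    rw [he]
    refine aux_sum h1 hadd hconj _ _ fun i _ => ?_
    have hmem := hNf i
    have he2 : ((Nf i : Matrix (Fin t) (Fin t) (MvPolynomial (Fin n) ℝ)))
          - ((X i : MvPolynomial (Fin n) ℝ) • (1 : Matrix (Fin t) (Fin t) (MvPolynomial (Fin n) ℝ)))ᵀ *
            ((X i : MvPolynomial (Fin n) ℝ) • (1 : Matrix (Fin t) (Fin t) (MvPolynomial (Fin n) ℝ)))
        = ((Nf i : MvPolynomial (Fin n) ℝ) - X i ^ 2) • (1 : Matrix (Fin t) (Fin t) (MvPolynomial (Fin n) ℝ)) := by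
      have hq : ((X i : MvPolynomial (Fin n) ℝ) • (1 : Matrix (Fin t) (Fin t) (MvPolynomial (Fin n) ℝ)))ᵀ *
            ((X i : MvPolynomial (Fin n) ℝ) • (1 : Matrix (Fin t) (Fin t) (MvPolynomial (Fin n) ℝ)))
          = ((X i : MvPolynomial (Fin n) ℝ) ^ 2) • (1 : Matrix (Fin t) (Fin t) (MvPolynomial (Fin n) ℝ)) := by
        rw [transpose_smul, transpose_one, Matrix.smul_mul, Matrix.one_mul, smul_smul, sq]
      rw [hq, natCast_eq_smul_one, ← sub_smul]
    rwa [he2] at hmem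
  · rintro ⟨N, hN⟩
    intro a
    have hB : ∀ i j : Fin t, ∃ K : ℕ,
        (((K : MvPolynomial (Fin n) ℝ) - (a i j) ^ 2) • (1 : Matrix (Fin t) (Fin t) (MvPolynomial (Fin n) ℝ))) ∈ M := fun i j =>
      b_sq_upper h1 hadd hconj (b_all h1 hadd hconj hN (a i j))
    choose K hK using hB
    refine ⟨∑ i, ∑ j, K i j, ?_⟩
    have h5 : (((∑ i, ∑ j, K i j : ℕ) : MvPolynomial (Fin n) ℝ) - ∑ i, ∑ j, (a i j) * (a i j))
          • (1 : Matrix (Fin t) (Fin t) (MvPolynomial (Fin n) ℝ)) ∈ M := by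
      have he : (((∑ i, ∑ j, K i j : ℕ) : MvPolynomial (Fin n) ℝ) - ∑ i, ∑ j, (a i j) * (a i j))
            • (1 : Matrix (Fin t) (Fin t) (MvPolynomial (Fin n) ℝ))
          = ∑ i : Fin t, ∑ j : Fin t,
              (((K i j : MvPolynomial (Fin n) ℝ) - (a i j) ^ 2) • (1 : Matrix (Fin t) (Fin t) (MvPolynomial (Fin n) ℝ))) := by
        simp only [← Finset.sum_smul]
        congr 1
        simp only [Nat.cast_sum, Finset.sum_sub_distrib, sq]
      rw [he]
      refine aux_sum h1 hadd hconj _ _ fun i _ => ?_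
      exact aux_sum h1 hadd hconj _ _ fun j _ => hK i j
    have h6 : (∑ i, ∑ j, (a i j) * (a i j)) • (1 : Matrix (Fin t) (Fin t) (MvPolynomial (Fin n) ℝ))
        - aᵀ * a ∈ M := by
      have hsum : ∑ i : Fin t, ∑ j : Fin t, ∑ k : Fin t,
          (Matrix.single i k (a i j) - Matrix.single i j (a i k))ᵀ *
          (Matrix.single i k (a i j) - Matrix.single i j (a i k)) ∈ M := by
        refine aux_sum h1 hadd hconj _ _ fun i _ => ?_
        refine aux_sum h1 hadd hconj _ _ fun j _ => ?_
        refine aux_sum h1 hadd hconj _ _ fun k _ => ?_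
        have := hconj 1 h1 (Matrix.single i k (a i j) - Matrix.single i j (a i k))
        rwa [Matrix.mul_one] at this
      rw [key_identity] at hsum
      have hfin := aux_const_smul' hconj (2⁻¹ : ℝ) (by norm_num) _ hsum
      rw [smul_smul] at hfin
      have hc : (C (2⁻¹ : ℝ) : MvPolynomial (Fin n) ℝ) * 2 = 1 := by
        rw [← map_ofNat (C : ℝ →+* MvPolynomial (Fin n) ℝ) 2, ← _root_.map_mul]
        norm_num
      rwa [hc, one_smul] at hfin
    have hmem := hadd _ h5 _ h6
    have he : (((∑ i, ∑ j, K i j : ℕ) : MvPolynomial (Fin n) ℝ) - ∑ i, ∑ j, (a i j) * (a i j))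
          • (1 : Matrix (Fin t) (Fin t) (MvPolynomial (Fin n) ℝ))
        + ((∑ i, ∑ j, (a i j) * (a i j)) • (1 : Matrix (Fin t) (Fin t) (MvPolynomial (Fin n) ℝ)) - aᵀ * a)
        = ((∑ i, ∑ j, K i j : ℕ) : Matrix (Fin t) (Fin t) (MvPolynomial (Fin n) ℝ)) - aᵀ * a := by
      rw [sub_smul, natCast_eq_smul_one]
      abel
    rwa [he] at hmem
end

section
/- Let G ⊆ Sym ℝ[X₁,…,Xₙ]^{t×t}. For each x ∈ S_G and each unit vector v ∈ ℝᵗ, the linear form L on Sym ℝ[X̄]^{t×t} defined by L(p) = ⟨p(x)v, v⟩ is a pure state on (Sym ℝ[X̄]^{t×t}, M_G). -/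
open Matrix

variable (n t : ℕ)

/-- Membership in the quadratic module `M_G` generated by `G` in `ℝ[X̄]^{t×t}`. -/
def InQM (G : Set (Matrix (Fin t) (Fin t) (MvPolynomial (Fin n) ℝ)))
    (f : Matrix (Fin t) (Fin t) (MvPolynomial (Fin n) ℝ)) : Prop :=
  ∃ (N : ℕ) (g p : Fin N → Matrix (Fin t) (Fin t) (MvPolynomial (Fin n) ℝ)),
    (∀ i, g i = 1 ∨ g i ∈ G) ∧ f = ∑ i, (p i)ᵀ * g i * p i

/-- The positivity set `S_G ⊆ ℝⁿ`. -/
def SG (G : Set (Matrix (Fin t) (Fin t) (MvPolynomial (Fin n) ℝ))) :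
    Set (Fin n → ℝ) :=
  {x | ∀ g ∈ G, (g.map (MvPolynomial.eval x)).PosSemidef}

/-- `M_G` is archimedean. -/
def IsArch (G : Set (Matrix (Fin t) (Fin t) (MvPolynomial (Fin n) ℝ))) : Prop :=
  ∀ a : Matrix (Fin t) (Fin t) (MvPolynomial (Fin n) ℝ),
    ∃ N : ℕ, InQM n t G ((N : Matrix (Fin t) (Fin t) (MvPolynomial (Fin n) ℝ)) - aᵀ * a)

/-- The real vector space of symmetric matrix polynomials. -/
noncomputable def SymSub : Submodule ℝ (Matrix (Fin t) (Fin t) (MvPolynomial (Fin n) ℝ)) where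
  carrier := {p | pᵀ = p}
  add_mem' := by
    intro a b ha hb
    simp only [Set.mem_setOf_eq, Matrix.transpose_add] at *
    rw [ha, hb]
  zero_mem' := by simp
  smul_mem' := by
    intro c a ha
    simp only [Set.mem_setOf_eq, Matrix.transpose_smul] at *
    rw [ha]

theorem one_mem_SymSub : (1 : Matrix (Fin t) (Fin t) (MvPolynomial (Fin n) ℝ)) ∈ SymSub n t :=
  Matrix.transpose_one

/-- A state on `(Sym ℝ[X̄]^{t×t}, M_G)`. -/
def IsState (G : Set (Matrix (Fin t) (Fin t) (MvPolynomial (Fin n) ℝ)))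
    (L : SymSub n t →ₗ[ℝ] ℝ) : Prop :=
  L ⟨1, one_mem_SymSub n t⟩ = 1 ∧
    ∀ (p : Matrix (Fin t) (Fin t) (MvPolynomial (Fin n) ℝ)) (hp : p ∈ SymSub n t),
      InQM n t G p → 0 ≤ L ⟨p, hp⟩

/-- A pure state: an extreme point of the convex set of states. -/
def IsPure (G : Set (Matrix (Fin t) (Fin t) (MvPolynomial (Fin n) ℝ)))
    (L : SymSub n t →ₗ[ℝ] ℝ) : Prop :=
  IsState n t G L ∧
    ∀ (L₁ L₂ : SymSub n t →ₗ[ℝ] ℝ) (θ : ℝ), IsState n t G L₁ → IsState n t G L₂ →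
      0 < θ → θ < 1 → L = θ • L₁ + (1 - θ) • L₂ → L₁ = L ∧ L₂ = L

/-- `L` is the state of point evaluation at `(x, v)`. -/
def Represents (L : SymSub n t →ₗ[ℝ] ℝ) (x : Fin n → ℝ) (v : Fin t → ℝ) : Prop :=
  ∀ (p : Matrix (Fin t) (Fin t) (MvPolynomial (Fin n) ℝ)) (hp : p ∈ SymSub n t),
    L ⟨p, hp⟩ = dotProduct (Matrix.mulVec (p.map (MvPolynomial.eval x)) v) v

section Aux
variable {n t : ℕ}

lemma mem_SymSub {p : Matrix (Fin t) (Fin t) (MvPolynomial (Fin n) ℝ)} :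
    p ∈ SymSub n t ↔ pᵀ = p := Iff.rfl

noncomputable def Emap (x : Fin n → ℝ) :
    Matrix (Fin t) (Fin t) (MvPolynomial (Fin n) ℝ) →ₐ[ℝ] Matrix (Fin t) (Fin t) ℝ :=
  (MvPolynomial.aeval x).mapMatrix

lemma Emap_eq (x : Fin n → ℝ) (M : Matrix (Fin t) (Fin t) (MvPolynomial (Fin n) ℝ)) :
    Emap x M = M.map (MvPolynomial.eval x) := by
  ext i j
  simp [Emap, AlgHom.mapMatrix_apply, Matrix.map_apply]

lemma Emap_transpose (x : Fin n → ℝ) (M : Matrix (Fin t) (Fin t) (MvPolynomial (Fin n) ℝ)) :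
    Emap x Mᵀ = (Emap x M)ᵀ := by
  rw [Emap_eq, Emap_eq, Matrix.transpose_map]

noncomputable def qform (v : Fin t → ℝ) : Matrix (Fin t) (Fin t) ℝ →ₗ[ℝ] ℝ where
  toFun M := M *ᵥ v ⬝ᵥ v
  map_add' A B := by simp [Matrix.add_mulVec, add_dotProduct]
  map_smul' c A := by simp [Matrix.smul_mulVec, smul_dotProduct]

lemma qform_apply (v : Fin t → ℝ) (M : Matrix (Fin t) (Fin t) ℝ) :
    qform v M = M *ᵥ v ⬝ᵥ v := rfl

noncomputable def evalL (x : Fin n → ℝ) (v : Fin t → ℝ) : SymSub n t →ₗ[ℝ] ℝ :=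
  (qform v) ∘ₗ (Emap x).toLinearMap ∘ₗ (SymSub n t).subtype

lemma evalL_apply (x : Fin n → ℝ) (v : Fin t → ℝ) (p) (hp : p ∈ SymSub n t) :
    evalL x v ⟨p, hp⟩ = (Emap x p) *ᵥ v ⬝ᵥ v := rfl

lemma quad_val (x : Fin n → ℝ) (v : Fin t → ℝ)
    (a B : Matrix (Fin t) (Fin t) (MvPolynomial (Fin n) ℝ)) :
    Emap x (aᵀ * B * a) *ᵥ v ⬝ᵥ v
      = (Emap x a *ᵥ v) ⬝ᵥ (Emap x B *ᵥ (Emap x a *ᵥ v)) := by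
  rw [_root_.map_mul, _root_.map_mul, Emap_transpose, ← Matrix.mulVec_mulVec, ← Matrix.mulVec_mulVec,
    Matrix.mulVec_transpose, ← Matrix.dotProduct_mulVec, dotProduct_comm]

lemma evalL_state {G : Set (Matrix (Fin t) (Fin t) (MvPolynomial (Fin n) ℝ))}
    {x : Fin n → ℝ} (hx : x ∈ SG n t G) {v : Fin t → ℝ} (hv : dotProduct v v = 1) :
    IsState n t G (evalL x v) := by
  constructor
  · rw [evalL_apply, _root_.map_one, Matrix.one_mulVec, hv]
  · rintro p hp ⟨N, g, q, hg, rfl⟩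
    have : evalL x v ⟨∑ i, (q i)ᵀ * g i * q i, hp⟩
        = ∑ i, qform v (Emap x ((q i)ᵀ * g i * q i)) := by
      show qform v (Emap x (∑ i, (q i)ᵀ * g i * q i)) = _
      rw [map_sum, map_sum]
    rw [this]
    apply Finset.sum_nonneg
    intro i _
    rw [qform_apply, quad_val]
    have hpsd : (Emap x (g i)).PosSemidef := by
      rcases hg i with h1 | h2
      · rw [h1, _root_.map_one]; exact Matrix.PosSemidef.one
      · rw [Emap_eq]; exact hx _ h2
    have := hpsd.dotProduct_mulVec_nonneg (Emap x (q i) *ᵥ v)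
    simpa using this

-- subtype arithmetic helpers
lemma L_add (L : SymSub n t →ₗ[ℝ] ℝ) {p q : Matrix (Fin t) (Fin t) (MvPolynomial (Fin n) ℝ)}
    (hp : p ∈ SymSub n t) (hq : q ∈ SymSub n t) (h : p + q ∈ SymSub n t) :
    L ⟨p + q, h⟩ = L ⟨p, hp⟩ + L ⟨q, hq⟩ := by
  rw [show (⟨p + q, h⟩ : SymSub n t) = ⟨p, hp⟩ + ⟨q, hq⟩ from rfl, map_add]

lemma L_sub (L : SymSub n t →ₗ[ℝ] ℝ) {p q : Matrix (Fin t) (Fin t) (MvPolynomial (Fin n) ℝ)}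
    (hp : p ∈ SymSub n t) (hq : q ∈ SymSub n t) (h : p - q ∈ SymSub n t) :
    L ⟨p - q, h⟩ = L ⟨p, hp⟩ - L ⟨q, hq⟩ := by
  rw [show (⟨p - q, h⟩ : SymSub n t) = ⟨p, hp⟩ - ⟨q, hq⟩ from rfl, map_sub]

lemma L_smul (L : SymSub n t →ₗ[ℝ] ℝ) {p : Matrix (Fin t) (Fin t) (MvPolynomial (Fin n) ℝ)}
    (c : ℝ) (hp : p ∈ SymSub n t) (h : c • p ∈ SymSub n t) :
    L ⟨c • p, h⟩ = c * L ⟨p, hp⟩ := by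
  rw [show (⟨c • p, h⟩ : SymSub n t) = c • (⟨p, hp⟩ : SymSub n t) from rfl, _root_.map_smul]
  rfl

lemma sym_mem (a b : Matrix (Fin t) (Fin t) (MvPolynomial (Fin n) ℝ)) :
    aᵀ * b + bᵀ * a ∈ SymSub n t := by
  rw [mem_SymSub, Matrix.transpose_add, Matrix.transpose_mul, Matrix.transpose_mul,
    Matrix.transpose_transpose, Matrix.transpose_transpose, add_comm]

lemma sq_mem (b : Matrix (Fin t) (Fin t) (MvPolynomial (Fin n) ℝ)) :
    bᵀ * b ∈ SymSub n t := by
  rw [mem_SymSub, Matrix.transpose_mul, Matrix.transpose_transpose]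

lemma sq_inQM (G : Set (Matrix (Fin t) (Fin t) (MvPolynomial (Fin n) ℝ)))
    (b : Matrix (Fin t) (Fin t) (MvPolynomial (Fin n) ℝ)) : InQM n t G (bᵀ * b) :=
  ⟨1, fun _ => 1, fun _ => b, fun _ => Or.inl rfl, by simp⟩

lemma key_vanish {G : Set (Matrix (Fin t) (Fin t) (MvPolynomial (Fin n) ℝ))}
    {x : Fin n → ℝ} {v : Fin t → ℝ}
    {L₁ L₂ : SymSub n t →ₗ[ℝ] ℝ} {θ : ℝ}
    (h1 : IsState n t G L₁) (h2 : IsState n t G L₂)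
    (hθ0 : 0 < θ) (hθ1 : θ < 1)
    (heq : evalL x v = θ • L₁ + (1 - θ) • L₂)
    (a b : Matrix (Fin t) (Fin t) (MvPolynomial (Fin n) ℝ))
    (hb : Emap x b *ᵥ v = 0) : L₁ ⟨aᵀ * b + bᵀ * a, sym_mem a b⟩ = 0 := by
  have hbb0 : L₁ ⟨bᵀ * b, sq_mem b⟩ = 0 := by
    have hge := h1.2 _ (sq_mem b) (sq_inQM G b)
    have hge2 := h2.2 _ (sq_mem b) (sq_inQM G b)
    have hval : evalL x v ⟨bᵀ * b, sq_mem b⟩ = 0 := by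
      have hbb : bᵀ * b = bᵀ * 1 * b := by rw [mul_one]
      rw [evalL_apply]
      conv_lhs => rw [hbb]
      rw [quad_val, _root_.map_one, Matrix.one_mulVec, hb]
      simp
    rw [heq] at hval
    simp only [LinearMap.add_apply, LinearMap.smul_apply, smul_eq_mul] at hval
    nlinarith
  have hquad : ∀ l : ℝ,
      0 ≤ L₁ ⟨aᵀ * a, sq_mem a⟩ + l * L₁ ⟨aᵀ * b + bᵀ * a, sym_mem a b⟩ := by
    intro l
    have hexp : (a + l • b)ᵀ * (a + l • b)
        = aᵀ * a + (l • (aᵀ * b + bᵀ * a) + (l * l) • (bᵀ * b)) := by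
      simp only [Matrix.transpose_add, Matrix.transpose_smul, add_mul, mul_add,
        Matrix.smul_mul, Matrix.mul_smul, smul_smul, smul_add]
      abel
    have hmem1 : l • (aᵀ * b + bᵀ * a) + (l * l) • (bᵀ * b) ∈ SymSub n t :=
      (SymSub n t).add_mem ((SymSub n t).smul_mem _ (sym_mem a b))
        ((SymSub n t).smul_mem _ (sq_mem b))
    have h0 := h1.2 _ (sq_mem (a + l • b)) (sq_inQM G (a + l • b))
    have hcalc : L₁ ⟨(a + l • b)ᵀ * (a + l • b), sq_mem _⟩
        = L₁ ⟨aᵀ * a, sq_mem a⟩ + (l * L₁ ⟨aᵀ * b + bᵀ * a, sym_mem a b⟩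
          + (l * l) * L₁ ⟨bᵀ * b, sq_mem b⟩) := by
      rw [show (⟨(a + l • b)ᵀ * (a + l • b), sq_mem _⟩ : SymSub n t)
          = ⟨aᵀ * a + (l • (aᵀ * b + bᵀ * a) + (l * l) • (bᵀ * b)),
             by rw [← hexp]; exact sq_mem _⟩ from Subtype.ext hexp]
      rw [L_add L₁ (sq_mem a) hmem1,
        L_add L₁ ((SymSub n t).smul_mem _ (sym_mem a b)) ((SymSub n t).smul_mem _ (sq_mem b)),
        L_smul L₁ l (sym_mem a b), L_smul L₁ (l * l) (sq_mem b)]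
    rw [hcalc, hbb0] at h0
    linarith
  by_contra hB
  have := hquad ((-(L₁ ⟨aᵀ * a, sq_mem a⟩) - 1) / L₁ ⟨aᵀ * b + bᵀ * a, sym_mem a b⟩)
  rw [div_mul_cancel₀ _ hB] at this
  linarith

noncomputable def Ev {n t : ℕ} (v : Fin t → ℝ) :
    Matrix (Fin t) (Fin t) (MvPolynomial (Fin n) ℝ) :=
  Matrix.of fun i j => MvPolynomial.C (v i * v j)

lemma Ev_transpose (v : Fin t → ℝ) :
    (Ev v : Matrix (Fin t) (Fin t) (MvPolynomial (Fin n) ℝ))ᵀ = Ev v := by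
  ext i j; simp [Ev, Matrix.transpose_apply, mul_comm]

lemma Ev_mem (v : Fin t → ℝ) :
    (Ev v : Matrix (Fin t) (Fin t) (MvPolynomial (Fin n) ℝ)) ∈ SymSub n t :=
  Ev_transpose v

lemma hv_sum {v : Fin t → ℝ} (hv : dotProduct v v = 1) : ∑ k, v k * v k = 1 := hv

lemma Ev_mul_Ev {v : Fin t → ℝ} (hv : dotProduct v v = 1) :
    (Ev v : Matrix (Fin t) (Fin t) (MvPolynomial (Fin n) ℝ)) * Ev v = Ev v := by
  ext i j
  simp only [Matrix.mul_apply, Ev, Matrix.of_apply, ← _root_.map_mul, ← map_sum]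
  congr 1
  have : ∀ k, v i * v k * (v k * v j) = v i * v j * (v k * v k) := fun k => by ring
  rw [Finset.sum_congr rfl fun k _ => this k, ← Finset.mul_sum, hv_sum hv, mul_one]

lemma Emap_Ev_mulVec {x : Fin n → ℝ} {v : Fin t → ℝ} (hv : dotProduct v v = 1) :
    Emap x (Ev v : Matrix (Fin t) (Fin t) (MvPolynomial (Fin n) ℝ)) *ᵥ v = v := by
  ext i
  simp only [Emap_eq, Matrix.mulVec, dotProduct, Matrix.map_apply, Ev,
    Matrix.of_apply, MvPolynomial.eval_C]
  have : ∀ k, v i * v k * v k = v i * (v k * v k) := fun k => by ring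
  rw [Finset.sum_congr rfl fun k _ => this k, ← Finset.mul_sum, hv_sum hv, mul_one]

lemma F_mem (v : Fin t → ℝ) :
    (1 - Ev v : Matrix (Fin t) (Fin t) (MvPolynomial (Fin n) ℝ)) ∈ SymSub n t := by
  rw [mem_SymSub, Matrix.transpose_sub, Matrix.transpose_one, Ev_transpose]

lemma Emap_F_mulVec {x : Fin n → ℝ} {v : Fin t → ℝ} (hv : dotProduct v v = 1) :
    Emap x (1 - Ev v : Matrix (Fin t) (Fin t) (MvPolynomial (Fin n) ℝ)) *ᵥ v = 0 := by
  rw [map_sub, _root_.map_one, Matrix.sub_mulVec, Matrix.one_mulVec, Emap_Ev_mulVec hv,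
    sub_self]

lemma F_mul_F {v : Fin t → ℝ} (hv : dotProduct v v = 1) :
    (1 - Ev v : Matrix (Fin t) (Fin t) (MvPolynomial (Fin n) ℝ)) * (1 - Ev v) = 1 - Ev v := by
  rw [sub_mul, one_mul, mul_sub, mul_one, Ev_mul_Ev hv]
  abel

lemma sE_mem (s : MvPolynomial (Fin n) ℝ) (v : Fin t → ℝ) :
    s • (Ev v : Matrix (Fin t) (Fin t) (MvPolynomial (Fin n) ℝ)) ∈ SymSub n t := by
  rw [mem_SymSub, Matrix.transpose_smul, Ev_transpose]

noncomputable def sPoly {n t : ℕ} (v : Fin t → ℝ)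
    (p : Matrix (Fin t) (Fin t) (MvPolynomial (Fin n) ℝ)) : MvPolynomial (Fin n) ℝ :=
  ∑ i, ∑ j, MvPolynomial.C (v i) * p i j * MvPolynomial.C (v j)

lemma EpE (v : Fin t → ℝ) (p : Matrix (Fin t) (Fin t) (MvPolynomial (Fin n) ℝ)) :
    Ev v * p * Ev v = sPoly v p • Ev v := by
  refine Matrix.ext fun k l => ?_
  simp only [Matrix.mul_apply, Matrix.smul_apply, smul_eq_mul, Ev, Matrix.of_apply, sPoly,
    Finset.sum_mul]
  refine Eq.trans Finset.sum_comm ?_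
  refine Finset.sum_congr rfl fun i _ => Finset.sum_congr rfl fun j _ => ?_
  simp only [_root_.map_mul]
  ring

lemma eval_sPoly (x : Fin n → ℝ) (v : Fin t → ℝ)
    (p : Matrix (Fin t) (Fin t) (MvPolynomial (Fin n) ℝ)) :
    Emap x p *ᵥ v ⬝ᵥ v = MvPolynomial.eval x (sPoly v p) := by
  simp only [sPoly, map_sum, _root_.map_mul, MvPolynomial.eval_C, dotProduct,
    Matrix.mulVec, Emap_eq, Matrix.map_apply, Finset.sum_mul]
  refine Finset.sum_congr rfl fun i _ => Finset.sum_congr rfl fun j _ => ?_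
  ring

lemma state_eq {G : Set (Matrix (Fin t) (Fin t) (MvPolynomial (Fin n) ℝ))}
    {x : Fin n → ℝ} {v : Fin t → ℝ} (hv : dotProduct v v = 1)
    {L₁ L₂ : SymSub n t →ₗ[ℝ] ℝ} {θ : ℝ}
    (h1 : IsState n t G L₁) (h2 : IsState n t G L₂)
    (hθ0 : 0 < θ) (hθ1 : θ < 1)
    (heq : evalL x v = θ • L₁ + (1 - θ) • L₂) : L₁ = evalL x v := by
  have key := fun a b hb => key_vanish h1 h2 hθ0 hθ1 heq a b hb
  have hbF : Emap x (1 - Ev v : Matrix (Fin t) (Fin t) (MvPolynomial (Fin n) ℝ)) *ᵥ v = 0 :=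
    Emap_F_mulVec hv
  -- L₁ (1 - Ev v) = 0
  have hL1F : L₁ ⟨1 - Ev v, F_mem v⟩ = 0 := by
    have h := key (1 - Ev v) (1 - Ev v) hbF
    have he : (1 - Ev v : Matrix (Fin t) (Fin t) (MvPolynomial (Fin n) ℝ))ᵀ * (1 - Ev v)
        + (1 - Ev v)ᵀ * (1 - Ev v) = (1 - Ev v) + (1 - Ev v) := by
      rw [F_mem v, F_mul_F hv]
    rw [show (⟨(1 - Ev v)ᵀ * (1 - Ev v) + (1 - Ev v)ᵀ * (1 - Ev v),
        sym_mem _ _⟩ : SymSub n t) = ⟨(1 - Ev v) + (1 - Ev v),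
        (SymSub n t).add_mem (F_mem v) (F_mem v)⟩ from Subtype.ext he,
      L_add L₁ (F_mem v) (F_mem v)] at h
    linarith
  -- L₁ (Ev v) = 1
  have hL1E : L₁ ⟨Ev v, Ev_mem v⟩ = 1 := by
    have he : (Ev v : Matrix (Fin t) (Fin t) (MvPolynomial (Fin n) ℝ))
        = 1 - (1 - Ev v) := by rw [sub_sub_cancel]
    rw [show (⟨Ev v, Ev_mem v⟩ : SymSub n t) = ⟨1 - (1 - Ev v),
        (SymSub n t).sub_mem (one_mem_SymSub n t) (F_mem v)⟩ from Subtype.ext he,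
      L_sub L₁ (one_mem_SymSub n t) (F_mem v), hL1F, h1.1, sub_zero]
  -- the functional on scalar polynomials
  have hPhi : ∀ s : MvPolynomial (Fin n) ℝ,
      L₁ ⟨s • Ev v, sE_mem s v⟩ = MvPolynomial.eval x s := by
    intro s
    induction s using MvPolynomial.induction_on with
    | C a =>
      have he : (MvPolynomial.C a : MvPolynomial (Fin n) ℝ) • Ev v
          = a • (Ev v : Matrix (Fin t) (Fin t) (MvPolynomial (Fin n) ℝ)) := by
        ext i j
        simp [Matrix.smul_apply, MvPolynomial.smul_eq_C_mul, smul_eq_mul]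
      rw [show (⟨MvPolynomial.C a • Ev v, sE_mem _ v⟩ : SymSub n t)
          = ⟨a • Ev v, (SymSub n t).smul_mem a (Ev_mem v)⟩ from Subtype.ext he,
        L_smul L₁ a (Ev_mem v), hL1E, mul_one, MvPolynomial.eval_C]
    | add p q ihp ihq =>
      have he : (p + q) • (Ev v : Matrix (Fin t) (Fin t) (MvPolynomial (Fin n) ℝ))
          = p • Ev v + q • Ev v := add_smul p q (Ev v)
      rw [show (⟨(p + q) • Ev v, sE_mem _ v⟩ : SymSub n t)
          = ⟨p • Ev v + q • Ev v,
            (SymSub n t).add_mem (sE_mem p v) (sE_mem q v)⟩ from Subtype.ext he,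
        L_add L₁ (sE_mem p v) (sE_mem q v), ihp, ihq, map_add]
    | mul_X p i ihp =>
      set d : MvPolynomial (Fin n) ℝ := MvPolynomial.X i - MvPolynomial.C (x i) with hd
      have hb : Emap x (d • Ev v : Matrix (Fin t) (Fin t) (MvPolynomial (Fin n) ℝ)) *ᵥ v
          = 0 := by
        have : Emap x (d • Ev v : Matrix (Fin t) (Fin t) (MvPolynomial (Fin n) ℝ)) = 0 := by
          ext k l
          simp [Emap_eq, Matrix.map_apply, Matrix.smul_apply, smul_eq_mul, hd, Ev]
        rw [this, Matrix.zero_mulVec]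
      have h := key (p • Ev v) (d • Ev v) hb
      have he : (p • Ev v : Matrix (Fin t) (Fin t) (MvPolynomial (Fin n) ℝ))ᵀ * (d • Ev v)
          + (d • Ev v)ᵀ * (p • Ev v) = (p * d) • Ev v + (p * d) • Ev v := by
        rw [Matrix.transpose_smul, Matrix.transpose_smul, Ev_transpose,
          Matrix.smul_mul, Matrix.mul_smul, Matrix.smul_mul, Matrix.mul_smul,
          smul_smul, smul_smul, Ev_mul_Ev hv, mul_comm d p]
      rw [show (⟨(p • Ev v)ᵀ * (d • Ev v) + (d • Ev v)ᵀ * (p • Ev v),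
          sym_mem _ _⟩ : SymSub n t) = ⟨(p * d) • Ev v + (p * d) • Ev v,
          (SymSub n t).add_mem (sE_mem _ v) (sE_mem _ v)⟩ from Subtype.ext he,
        L_add L₁ (sE_mem _ v) (sE_mem _ v)] at h
      have hqE : L₁ ⟨(p * d) • Ev v, sE_mem _ v⟩ = 0 := by linarith
      have he2 : ((p * d) • Ev v : Matrix (Fin t) (Fin t) (MvPolynomial (Fin n) ℝ))
          = (p * MvPolynomial.X i) • Ev v - (x i) • (p • Ev v) := by
        rw [hd, mul_sub, sub_smul,
          show p * MvPolynomial.C (x i) = (x i) • p from by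
            rw [MvPolynomial.smul_eq_C_mul, mul_comm],
          smul_assoc]
      rw [show (⟨(p * d) • Ev v, sE_mem _ v⟩ : SymSub n t)
          = ⟨(p * MvPolynomial.X i) • Ev v - (x i) • (p • Ev v),
            (SymSub n t).sub_mem (sE_mem _ v) ((SymSub n t).smul_mem _ (sE_mem p v))⟩
          from Subtype.ext he2,
        L_sub L₁ (sE_mem _ v) ((SymSub n t).smul_mem _ (sE_mem p v)),
        L_smul L₁ (x i) (sE_mem p v), ihp] at hqE
      rw [_root_.map_mul, MvPolynomial.eval_X]
      linarith
  -- final computation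
  apply LinearMap.ext
  rintro ⟨p, hp⟩
  have hpT : pᵀ = p := hp
  have hEt : (Ev v : Matrix (Fin t) (Fin t) (MvPolynomial (Fin n) ℝ))ᵀ = Ev v :=
    Ev_transpose v
  have hFt : (1 - Ev v : Matrix (Fin t) (Fin t) (MvPolynomial (Fin n) ℝ))ᵀ = 1 - Ev v :=
    F_mem v
  have hmemEpE : Ev v * p * Ev v ∈ SymSub n t := by
    rw [EpE]; exact sE_mem _ v
  have heMid : (p * Ev v)ᵀ * (1 - Ev v) + (1 - Ev v)ᵀ * (p * Ev v)
      = Ev v * p * (1 - Ev v) + (1 - Ev v) * p * Ev v := by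
    rw [Matrix.transpose_mul, hpT, hEt, hFt]
    simp only [mul_assoc]
  have hmemMid : Ev v * p * (1 - Ev v) + (1 - Ev v) * p * Ev v ∈ SymSub n t := by
    rw [← heMid]; exact sym_mem _ _
  have heFpF : (p * (1 - Ev v))ᵀ * (1 - Ev v) + (1 - Ev v)ᵀ * (p * (1 - Ev v))
      = (1 - Ev v) * p * (1 - Ev v) + (1 - Ev v) * p * (1 - Ev v) := by
    rw [Matrix.transpose_mul, hpT, hFt]
    simp only [mul_assoc]
  have hmemFpF : (1 - Ev v) * p * (1 - Ev v) ∈ SymSub n t := by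
    rw [mem_SymSub, Matrix.transpose_mul, Matrix.transpose_mul, hpT, hFt]
    simp only [mul_assoc]
  have hmid0 : L₁ ⟨Ev v * p * (1 - Ev v) + (1 - Ev v) * p * Ev v, hmemMid⟩ = 0 := by
    have h := key (p * Ev v) (1 - Ev v) hbF
    rwa [show (⟨(p * Ev v)ᵀ * (1 - Ev v) + (1 - Ev v)ᵀ * (p * Ev v), sym_mem _ _⟩ : SymSub n t)
        = ⟨Ev v * p * (1 - Ev v) + (1 - Ev v) * p * Ev v, hmemMid⟩
        from Subtype.ext heMid] at h
  have hFpF0 : L₁ ⟨(1 - Ev v) * p * (1 - Ev v), hmemFpF⟩ = 0 := by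
    have h := key (p * (1 - Ev v)) (1 - Ev v) hbF
    rw [show (⟨(p * (1 - Ev v))ᵀ * (1 - Ev v) + (1 - Ev v)ᵀ * (p * (1 - Ev v)),
          sym_mem _ _⟩ : SymSub n t)
        = ⟨(1 - Ev v) * p * (1 - Ev v) + (1 - Ev v) * p * (1 - Ev v),
          (SymSub n t).add_mem hmemFpF hmemFpF⟩ from Subtype.ext heFpF,
      L_add L₁ hmemFpF hmemFpF] at h
    linarith
  have hEpE1 : L₁ ⟨Ev v * p * Ev v, hmemEpE⟩ = MvPolynomial.eval x (sPoly v p) := by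
    rw [show (⟨Ev v * p * Ev v, hmemEpE⟩ : SymSub n t)
        = ⟨sPoly v p • Ev v, sE_mem _ v⟩ from Subtype.ext (EpE v p), hPhi]
  have hdecomp : Ev v * p * Ev v + ((Ev v * p * (1 - Ev v) + (1 - Ev v) * p * Ev v)
      + (1 - Ev v) * p * (1 - Ev v)) = p := by
    simp only [mul_sub, sub_mul, mul_one, one_mul]
    abel
  have hL1p : L₁ ⟨p, hp⟩ = MvPolynomial.eval x (sPoly v p) := by
    rw [show (⟨p, hp⟩ : SymSub n t)
        = ⟨Ev v * p * Ev v + ((Ev v * p * (1 - Ev v) + (1 - Ev v) * p * Ev v)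
            + (1 - Ev v) * p * (1 - Ev v)),
          (SymSub n t).add_mem hmemEpE ((SymSub n t).add_mem hmemMid hmemFpF)⟩
        from Subtype.ext hdecomp.symm,
      L_add L₁ hmemEpE ((SymSub n t).add_mem hmemMid hmemFpF),
      L_add L₁ hmemMid hmemFpF, hmid0, hFpF0, hEpE1]
    ring
  rw [hL1p, evalL_apply, eval_sPoly]

end Aux

/-- **Proposition 9.** For every `x ∈ S_G` and unit vector `v ∈ ℝᵗ`, the linear form
`p ↦ ⟨p(x)v, v⟩` is a pure state on `(Sym ℝ[X̄]^{t×t}, M_G)`. -/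
theorem stmt11 (G : Set (Matrix (Fin t) (Fin t) (MvPolynomial (Fin n) ℝ)))
    (hG : ∀ g ∈ G, gᵀ = g)
    (x : Fin n → ℝ) (hx : x ∈ SG n t G) (v : Fin t → ℝ) (hv : dotProduct v v = 1) :
    ∃ L : SymSub n t →ₗ[ℝ] ℝ, Represents n t L x v ∧ IsPure n t G L := by
  refine ⟨evalL x v, ?_, ?_, ?_⟩
  · intro p hp
    rw [evalL_apply, Emap_eq]
  · exact evalL_state hx hv
  · intro L₁ L₂ θ h1 h2 hθ0 hθ1 hdec
    refine ⟨state_eq hv h1 h2 hθ0 hθ1 hdec, ?_⟩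
    apply state_eq (θ := 1 - θ) hv h2 h1 (by linarith) (by linarith)
    rw [hdec, show (1 : ℝ) - (1 - θ) = θ from by ring]
    exact add_comm _ _
end

section
/- (Putinar) Suppose G ∪ {f} ⊆ ℝ[X₁,…,Xₙ] and the quadratic module Q_G ⊆ ℝ[X̄] is archimedean. If f(x) > 0 for all x ∈ S_G, then f ∈ Q_G. -/
open MvPolynomial

/-- Membership in the quadratic module `Q_G` generated by `G` in `ℝ[X̄]`. -/
def InQ (n : ℕ) (G : Set (MvPolynomial (Fin n) ℝ)) (f : MvPolynomial (Fin n) ℝ) : Prop :=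
  ∃ (N : ℕ) (g p : Fin N → MvPolynomial (Fin n) ℝ),
    (∀ i, g i = 1 ∨ g i ∈ G) ∧ f = ∑ i, (p i) ^ 2 * g i

namespace Putinar

variable {n : ℕ}

abbrev A (n : ℕ) := MvPolynomial (Fin n) ℝ

/-- squares -/
def Sq (n : ℕ) : Set (A n) := {x | ∃ q, x = q ^ 2}

/-- sums of squares -/
noncomputable def SOS (n : ℕ) : AddSubmonoid (A n) := AddSubmonoid.closure (Sq n)

def Gens (G : Set (A n)) : Set (A n) := {x | ∃ p g, (g = 1 ∨ g ∈ G) ∧ x = p ^ 2 * g}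

noncomputable def Qmod (G : Set (A n)) : AddSubmonoid (A n) := AddSubmonoid.closure (Gens G)

lemma sq_mem_SOS (q : A n) : q ^ 2 ∈ SOS n :=
  AddSubmonoid.subset_closure ⟨q, rfl⟩

lemma one_mem_SOS : (1 : A n) ∈ SOS n := by simpa using sq_mem_SOS (1 : A n)

lemma sq_mul_mem_SOS {s : A n} (q : A n) (hs : s ∈ SOS n) : q ^ 2 * s ∈ SOS n := by
  induction hs using AddSubmonoid.closure_induction with
  | mem x hx =>
    obtain ⟨r, rfl⟩ := hx
    have := sq_mem_SOS (q * r); rwa [mul_pow] at this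
  | zero => simpa using (SOS n).zero_mem
  | add x y hx hy ihx ihy => rw [mul_add]; exact (SOS n).add_mem ihx ihy

/-- abstract quadratic modules (as subsets) -/
structure IsQM (P : Set (A n)) : Prop where
  add_mem : ∀ {a b : A n}, a ∈ P → b ∈ P → a + b ∈ P
  sq_mul_mem : ∀ (q : A n) {a : A n}, a ∈ P → q ^ 2 * a ∈ P
  one_mem : (1 : A n) ∈ P

namespace IsQM

variable {P : Set (A n)} (hP : IsQM P)
include hP

lemma zero_mem : (0 : A n) ∈ P := by
  have := hP.sq_mul_mem 0 hP.one_mem; simpa using this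

lemma sq_mem (q : A n) : q ^ 2 ∈ P := by
  have := hP.sq_mul_mem q hP.one_mem; simpa using this

lemma const_mem {c : ℝ} (hc : 0 ≤ c) : (C c : A n) ∈ P := by
  have := hP.sq_mem (C (Real.sqrt c) : A n)
  rwa [← map_pow, Real.sq_sqrt hc] at this

lemma smul_mem {c : ℝ} (hc : 0 ≤ c) {a : A n} (ha : a ∈ P) : C c * a ∈ P := by
  have := hP.sq_mul_mem (C (Real.sqrt c) : A n) ha
  rwa [← map_pow, Real.sq_sqrt hc] at this

lemma sos_mul_mem {s a : A n} (hs : s ∈ SOS n) (ha : a ∈ P) : s * a ∈ P := by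
  induction hs using AddSubmonoid.closure_induction with
  | mem x hx => obtain ⟨q, rfl⟩ := hx; exact hP.sq_mul_mem q ha
  | zero => simpa using hP.zero_mem
  | add x y hx hy ihx ihy => rw [add_mul]; exact hP.add_mem ihx ihy

lemma sos_mem {s : A n} (hs : s ∈ SOS n) : s ∈ P := by
  simpa using hP.sos_mul_mem hs hP.one_mem

/-- if `-1 ∈ P` then `P` is everything -/
lemma all_of_neg_one (h : (-1 : A n) ∈ P) (a : A n) : a ∈ P := by
  have h1 : (C (2⁻¹ : ℝ) * (a + 1)) ^ 2 ∈ P := hP.sq_mem _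
  have h2 : (C (2⁻¹ : ℝ) * (a - 1)) ^ 2 * (-1) ∈ P := hP.sq_mul_mem _ h
  have := hP.add_mem h1 h2
  have hhalf : (C (2⁻¹ : ℝ) : A n) * 2 = 1 := by
    rw [show (2 : A n) = C (2:ℝ) from (map_ofNat _ 2).symm, ← map_mul]
    norm_num
  have heq : (C (2⁻¹ : ℝ) * (a + 1)) ^ 2 + (C (2⁻¹ : ℝ) * (a - 1)) ^ 2 * (-1) = a := by
    linear_combination (a * (C (2⁻¹:ℝ) * 2 + 1)) * hhalf
  rwa [heq] at this

/-- if a negative constant is in `P`, then `-1 ∈ P` -/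
lemma neg_one_of_neg_const {c : ℝ} (hc : c < 0) (h : (C c : A n) ∈ P) : (-1 : A n) ∈ P := by
  have hpos : (0:ℝ) ≤ -c⁻¹ := by
    have : c⁻¹ < 0 := inv_lt_zero.mpr hc
    linarith
  have h2 : (C (-c⁻¹) * C c : A n) ∈ P := hP.smul_mem hpos h
  rw [← map_mul] at h2
  have hcc : -c⁻¹ * c = -1 := by rw [neg_mul, inv_mul_cancel₀ hc.ne]; 
  rw [hcc] at h2
  simpa using h2

end IsQM

lemma isQM_Qmod (G : Set (A n)) : IsQM (Qmod G : Set (A n)) := by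
  refine ⟨fun ha hb => (Qmod G).add_mem ha hb, ?_, ?_⟩
  · intro q a ha
    induction ha using AddSubmonoid.closure_induction with
    | mem x hx =>
      obtain ⟨p, g, hg, rfl⟩ := hx
      exact AddSubmonoid.subset_closure ⟨q * p, g, hg, by ring⟩
    | zero => simpa using (Qmod G).zero_mem
    | add x y hx hy ihx ihy => rw [mul_add]; exact (Qmod G).add_mem ihx ihy
  · exact AddSubmonoid.subset_closure ⟨1, 1, Or.inl rfl, by ring⟩

lemma G_subset_Qmod (G : Set (A n)) {g : A n} (hg : g ∈ G) : g ∈ Qmod G :=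
  AddSubmonoid.subset_closure ⟨1, g, Or.inr hg, by ring⟩

lemma SOS_subset_Qmod (G : Set (A n)) {s : A n} (hs : s ∈ SOS n) : s ∈ Qmod G :=
  (isQM_Qmod G).sos_mem hs

/-- `InQ` is the same as membership in `Qmod`. -/
lemma inQ_iff_mem_Qmod (G : Set (A n)) (f : A n) : InQ n G f ↔ f ∈ Qmod G := by
  constructor
  · rintro ⟨N, g, p, hg, rfl⟩
    exact AddSubmonoid.sum_mem _ fun i _ => AddSubmonoid.subset_closure ⟨p i, g i, hg i, rfl⟩
  · intro hf
    induction hf using AddSubmonoid.closure_induction with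
    | mem x hx =>
      obtain ⟨p, g, hg, rfl⟩ := hx
      exact ⟨1, fun _ => g, fun _ => p, fun _ => hg, by simp⟩
    | zero => exact ⟨0, Fin.elim0, Fin.elim0, fun i => i.elim0, by simp⟩
    | add x y hx hy ihx ihy =>
      obtain ⟨N₁, g₁, p₁, hg₁, rfl⟩ := ihx
      obtain ⟨N₂, g₂, p₂, hg₂, rfl⟩ := ihy
      refine ⟨N₁ + N₂, Fin.append g₁ g₂, Fin.append p₁ p₂, ?_, ?_⟩
      · intro i
        refine Fin.addCases (fun j => ?_) (fun j => ?_) i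
        · rw [Fin.append_left]; exact hg₁ j
        · rw [Fin.append_right]; exact hg₂ j
      · rw [Fin.sum_univ_add]
        simp [Fin.append_left, Fin.append_right]

end Putinar
section KeyLemma

namespace Putinar

variable {n : ℕ} {G : Set (A n)}

lemma half_mul_two : (C (2⁻¹ : ℝ) : A n) * 2 = 1 := by
  rw [show (2 : A n) = C (2:ℝ) from (map_ofNat _ 2).symm, ← map_mul]
  norm_num

/-- archimedean for arbitrary elements -/
lemma arch' (harch : ∀ p : A n, ∃ N : ℕ, InQ n G ((N : A n) - p ^ 2)) :
    ∀ p : A n, ∃ r : ℝ, C r - p ∈ Qmod G := by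
  intro p
  obtain ⟨N, hN⟩ := harch (C (2⁻¹) * (p + 1))
  rw [inQ_iff_mem_Qmod] at hN
  refine ⟨N, ?_⟩
  have h2 : ((C 2⁻¹ : A n) * (p - 1)) ^ 2 ∈ Qmod G := (isQM_Qmod G).sq_mem _
  have h3 := (Qmod G).add_mem hN h2
  have heq : ((N : A n) - (C 2⁻¹ * (p + 1)) ^ 2) + (C 2⁻¹ * (p - 1)) ^ 2
      = C (N : ℝ) - p := by
    rw [show ((N : ℕ) : A n) = C ((N : ℕ) : ℝ) from (map_natCast _ _).symm]
    linear_combination (-(p) * (2 * (C (2⁻¹:ℝ) : A n) + 1)) * (half_mul_two (n := n))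
  rwa [heq] at h3

-- the key archimedean descent lemma
set_option maxHeartbeats 2000000 in
lemma key_lemma (harch' : ∀ p : A n, ∃ r : ℝ, C r - p ∈ Qmod G)
    {s b m : A n} (hs : s ∈ SOS n) (hm : m ∈ Qmod G) (hsb : s * b = 1 + m) :
    b ∈ Qmod G := by
  have hQM := isQM_Qmod G
  obtain ⟨k₀, hk₀⟩ := harch' (-b)
  set k : ℝ := max k₀ 0 with hkdef
  have hk0 : 0 ≤ k := le_max_right _ _
  have hk : b + C k ∈ Qmod G := by
    have h2 : (C (k - k₀) : A n) ∈ Qmod G := hQM.const_mem (by simp [hkdef])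
    have h3 := (Qmod G).add_mem hk₀ h2
    rwa [show (C k₀ - -b) + C (k - k₀) = b + C k by rw [map_sub]; ring] at h3
  obtain ⟨c₁₀, hc₁₀⟩ := harch' (s ^ 2 * b)
  set C₁ : ℝ := max c₁₀ 0 with hC₁def
  have hC₁0 : 0 ≤ C₁ := le_max_right _ _
  have hC₁ : C C₁ - s ^ 2 * b ∈ Qmod G := by
    have h2 : (C (C₁ - c₁₀) : A n) ∈ Qmod G := hQM.const_mem (by simp [hC₁def])
    have h3 := (Qmod G).add_mem hc₁₀ h2
    rwa [show (C c₁₀ - s ^ 2 * b) + C (C₁ - c₁₀) = C C₁ - s ^ 2 * b by rw [map_sub]; ring] at h3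
  obtain ⟨c₂₀, hc₂₀⟩ := harch' (s ^ 2)
  set C₂ : ℝ := max c₂₀ 0 with hC₂def
  have hC₂0 : 0 ≤ C₂ := le_max_right _ _
  have hC₂ : C C₂ - s ^ 2 ∈ Qmod G := by
    have h2 : (C (C₂ - c₂₀) : A n) ∈ Qmod G := hQM.const_mem (by simp [hC₂def])
    have h3 := (Qmod G).add_mem hc₂₀ h2
    rwa [show (C c₂₀ - s ^ 2) + C (C₂ - c₂₀) = C C₂ - s ^ 2 by rw [map_sub]; ring] at h3
  set N : ℝ := C₁ + k * C₂ + 1 with hNdef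
  have hN1 : 1 ≤ N := by nlinarith
  have hNpos : 0 < N := by linarith
  -- the descent step
  have step : ∀ lam : ℝ, 0 ≤ lam → lam ≤ k → b + C lam ∈ Qmod G →
      b + C (lam - 1 / N) ∈ Qmod G := by
    intro lam h0 hlk hmem
    have e₁ : (C N - s) ^ 2 * (b + C lam) ∈ Qmod G := hQM.sq_mul_mem _ hmem
    have e₂ : C (2 * N) * m ∈ Qmod G := hQM.smul_mem (by positivity) hm
    have e₄ : C lam * (C C₂ - s ^ 2) ∈ Qmod G := hQM.smul_mem h0 hC₂
    have e₅ : C (2 * lam * N) * s ∈ Qmod G :=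
      hQM.smul_mem (by positivity) (SOS_subset_Qmod G hs)
    have hsum := (Qmod G).add_mem ((Qmod G).add_mem ((Qmod G).add_mem
      ((Qmod G).add_mem e₁ e₂) hC₁) e₄) e₅
    have hid : (C N - s) ^ 2 * (b + C lam) + C (2 * N) * m + (C C₁ - s ^ 2 * b)
        + C lam * (C C₂ - s ^ 2) + C (2 * lam * N) * s
        = C (N ^ 2) * b + C (lam * N ^ 2 - 2 * N + C₁ + lam * C₂) := by
      simp only [map_mul, map_add, map_sub, map_pow, map_ofNat]
      linear_combination ((-2 : A n) * C N) * hsb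
    rw [hid] at hsum
    have h6 : C (1 / N ^ 2) * (C (N ^ 2) * b + C (lam * N ^ 2 - 2 * N + C₁ + lam * C₂))
        ∈ Qmod G := hQM.smul_mem (by positivity) hsum
    have h7 : C (1 / N ^ 2) * (C (N ^ 2) * b + C (lam * N ^ 2 - 2 * N + C₁ + lam * C₂))
        = b + C ((lam * N ^ 2 - 2 * N + C₁ + lam * C₂) / N ^ 2) := by
      rw [mul_add, ← mul_assoc, ← map_mul, ← map_mul]
      rw [show 1 / N ^ 2 * N ^ 2 = 1 by field_simp, map_one, one_mul]
      rw [show 1 / N ^ 2 * (lam * N ^ 2 - 2 * N + C₁ + lam * C₂)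
        = (lam * N ^ 2 - 2 * N + C₁ + lam * C₂) / N ^ 2 by ring]
    rw [h7] at h6
    have hcn : 0 ≤ (lam - 1 / N) - (lam * N ^ 2 - 2 * N + C₁ + lam * C₂) / N ^ 2 := by
      have h9 : (lam - 1 / N) - (lam * N ^ 2 - 2 * N + C₁ + lam * C₂) / N ^ 2
          = (N - C₁ - lam * C₂) / N ^ 2 := by field_simp; try ring
      rw [h9]
      have : 1 ≤ N - C₁ - lam * C₂ := by nlinarith
      positivity
    have h8 : (C ((lam - 1 / N) - (lam * N ^ 2 - 2 * N + C₁ + lam * C₂) / N ^ 2) : A n)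
        ∈ Qmod G := hQM.const_mem hcn
    have h10 := (Qmod G).add_mem h6 h8
    rwa [show (b + C ((lam * N ^ 2 - 2 * N + C₁ + lam * C₂) / N ^ 2))
        + C ((lam - 1 / N) - (lam * N ^ 2 - 2 * N + C₁ + lam * C₂) / N ^ 2)
        = b + C (lam - 1 / N) by rw [map_sub]; ring] at h10
  -- iterate the descent
  have h1N : 0 < 1 / N := by positivity
  have iter : ∀ j : ℕ, 0 ≤ k - j * (1 / N) → b + C (k - j * (1 / N)) ∈ Qmod G := by
    intro j
    induction j with
    | zero => intro _; simpa using hk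
    | succ j ih =>
      intro hj
      have hjc : ((j : ℝ) + 1) * (1 / N) = j * (1 / N) + 1 / N := by ring
      have hj' : 0 ≤ k - j * (1 / N) := by push_cast at hj; nlinarith
      have hle : k - j * (1 / N) ≤ k := by
        have : 0 ≤ (j : ℝ) * (1 / N) := by positivity
        linarith
      have h := step _ hj' hle (ih hj')
      rwa [show k - j * (1 / N) - 1 / N = k - ((j : ℕ) + 1 : ℝ) * (1 / N) by ring,
        show ((j : ℕ) + 1 : ℝ) = (((j + 1 : ℕ) : ℝ)) by push_cast; ring] at h
  set j₀ : ℕ := ⌊k * N⌋₊ with hj₀def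
  have hfl : (j₀ : ℝ) ≤ k * N := Nat.floor_le (by positivity)
  have hfl2 : k * N < j₀ + 1 := Nat.lt_floor_add_one _
  have hj₀ : 0 ≤ k - j₀ * (1 / N) := by
    rw [show k - j₀ * (1 / N) = (k * N - j₀) * (1 / N) by field_simp]
    have : 0 ≤ k * N - j₀ := by linarith
    positivity
  have hb1 := iter j₀ hj₀
  have hle : k - j₀ * (1 / N) ≤ k := by
    have : 0 ≤ (j₀ : ℝ) * (1 / N) := by positivity
    linarith
  have hb2 := step _ hj₀ hle hb1
  have hμ : k - j₀ * (1 / N) - 1 / N < 0 := by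
    have h11 : k * N - j₀ - 1 < 0 := by linarith
    have h12 : k - j₀ * (1 / N) - 1 / N = (k * N - j₀ - 1) * (1 / N) := by field_simp; try ring
    rw [h12]
    exact mul_neg_of_neg_of_pos h11 h1N
  have hc : (C (-(k - j₀ * (1 / N) - 1 / N)) : A n) ∈ Qmod G := hQM.const_mem (by linarith)
  have hfin := (Qmod G).add_mem hb2 hc
  rwa [show (b + C (k - j₀ * (1 / N) - 1 / N)) + C (-(k - j₀ * (1 / N) - 1 / N)) = b by
    rw [map_neg]; ring] at hfin

end Putinar

end KeyLemma
namespace Putinar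

variable {n : ℕ}

/-- the quadratic module generated by `P` and one extra element `b` -/
def genQM (P : Set (A n)) (b : A n) : Set (A n) :=
  {x | ∃ p ∈ P, ∃ s ∈ SOS n, x = p + s * b}

lemma isQM_genQM {P : Set (A n)} (hP : IsQM P) (b : A n) : IsQM (genQM P b) := by
  constructor
  · rintro x y ⟨p₁, hp₁, s₁, hs₁, rfl⟩ ⟨p₂, hp₂, s₂, hs₂, rfl⟩
    exact ⟨p₁ + p₂, hP.add_mem hp₁ hp₂, s₁ + s₂, (SOS n).add_mem hs₁ hs₂, by ring⟩
  · rintro q x ⟨p, hp, s, hs, rfl⟩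
    exact ⟨q ^ 2 * p, hP.sq_mul_mem q hp, q ^ 2 * s, sq_mul_mem_SOS q hs, by ring⟩
  · exact ⟨1, hP.one_mem, 0, (SOS n).zero_mem, by ring⟩

lemma subset_genQM {P : Set (A n)} (b : A n) : P ⊆ genQM P b :=
  fun p hp => ⟨p, hp, 0, (SOS n).zero_mem, by ring⟩

lemma mem_genQM_self {P : Set (A n)} (hP : IsQM P) (b : A n) : b ∈ genQM P b :=
  ⟨0, hP.zero_mem, 1, one_mem_SOS, by ring⟩

set_option maxHeartbeats 2000000 in
-- From a proper, total, archimedean quadratic module we extract a point of ℝⁿ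
-- where all members of P are nonnegative (Kadison–Dubois / GNS style construction).
lemma exists_point {P : Set (A n)} (hPQM : IsQM P) (hn1 : (-1 : A n) ∉ P)
    (htot : ∀ b : A n, b ∈ P ∨ -b ∈ P)
    (harchP : ∀ p : A n, ∃ r : ℝ, C r - p ∈ P) :
    ∃ x : Fin n → ℝ, ∀ p ∈ P, 0 ≤ eval x p := by
  classical
  set φ : A n → ℝ := fun b => sInf {r : ℝ | C r - b ∈ P} with hφdef
  have hconst : ∀ {c : ℝ}, (C c : A n) ∈ P → 0 ≤ c := by
    intro c hc
    by_contra h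
    exact hn1 (hPQM.neg_one_of_neg_const (by linarith) hc)
  have hne : ∀ b : A n, {r : ℝ | C r - b ∈ P}.Nonempty := fun b => harchP b
  have hbdd : ∀ b : A n, BddBelow {r : ℝ | C r - b ∈ P} := by
    intro b
    obtain ⟨t, ht⟩ := harchP (-b)
    refine ⟨-t, fun r hr => ?_⟩
    have h2 := hPQM.add_mem hr ht
    rw [show (C r - b) + (C t - -b) = C (r + t) by rw [map_add]; ring] at h2
    linarith [hconst h2]
  have φle : ∀ (b : A n) (r : ℝ), C r - b ∈ P → φ b ≤ r := fun b r h => csInf_le (hbdd b) h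
  have φmem : ∀ (b : A n) (r : ℝ), φ b < r → C r - b ∈ P := by
    intro b r h
    obtain ⟨r', hr', hlt⟩ := exists_lt_of_csInf_lt (hne b) h
    have h2 := hPQM.add_mem hr' (hPQM.const_mem (c := r - r') (by linarith))
    rwa [show (C r' - b) + C (r - r') = C r - b by rw [map_sub]; ring] at h2
  have φge : ∀ (b : A n) (r : ℝ), b - C r ∈ P → r ≤ φ b := by
    intro b r h
    refine le_csInf (hne b) fun u hu => ?_
    have h2 := hPQM.add_mem hu h
    rw [show (C u - b) + (b - C r) = C (u - r) by rw [map_sub]; ring] at h2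
    linarith [hconst h2]
  have φtot : ∀ (b : A n) (r : ℝ), r < φ b → b - C r ∈ P := by
    intro b r h
    rcases htot (b - C r) with h2 | h2
    · exact h2
    · rw [show -(b - C r) = C r - b by ring] at h2
      exact absurd (φle b r h2) (not_le.mpr h)
  have φP : ∀ p ∈ P, 0 ≤ φ p := by
    intro p hp
    exact φge p 0 (by simpa using hp)
  have φC : ∀ c : ℝ, φ (C c) = c := by
    intro c
    refine le_antisymm (φle _ c (by simpa using hPQM.zero_mem))
      (φge _ c (by simpa using hPQM.zero_mem))
  have φadd : ∀ b c : A n, φ (b + c) = φ b + φ c := by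
    intro b c
    refine le_antisymm (le_of_forall_pos_le_add fun ε hε => ?_)
      (le_of_forall_pos_le_add fun ε hε => ?_)
    · have h1 : C (φ b + ε / 2) - b ∈ P := φmem b _ (by linarith)
      have h2 : C (φ c + ε / 2) - c ∈ P := φmem c _ (by linarith)
      have h3 := hPQM.add_mem h1 h2
      rw [show (C (φ b + ε / 2) - b) + (C (φ c + ε / 2) - c)
          = C ((φ b + ε / 2) + (φ c + ε / 2)) - (b + c) by
            conv_rhs => rw [map_add]
            ring] at h3
      have h4 := φle _ _ h3
      linarith
    · have h1 : b - C (φ b - ε / 2) ∈ P := φtot b _ (by linarith)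
      have h2 : c - C (φ c - ε / 2) ∈ P := φtot c _ (by linarith)
      have h3 := hPQM.add_mem h1 h2
      rw [show (b - C (φ b - ε / 2)) + (c - C (φ c - ε / 2))
          = (b + c) - C ((φ b - ε / 2) + (φ c - ε / 2)) by
            conv_rhs => rw [map_add]
            ring] at h3
      linarith [φge _ _ h3]
  have φzero : φ 0 = 0 := by
    have := φC 0; rwa [map_zero] at this
  have φneg : ∀ b : A n, φ (-b) = -φ b := by
    intro b
    have h := φadd b (-b)
    rw [add_neg_cancel, φzero] at h
    linarith
  have φsmul : ∀ (c : ℝ) (b : A n), 0 < c → φ (C c * b) = c * φ b := by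
    intro c b hc
    refine le_antisymm (le_of_forall_pos_le_add fun ε hε => ?_)
      (le_of_forall_pos_le_add fun ε hε => ?_)
    · have h1 : C (φ b + ε / c) - b ∈ P := φmem b _ (by nlinarith [div_pos hε hc])
      have h2 := hPQM.smul_mem hc.le h1
      rw [show C c * (C (φ b + ε / c) - b) = C (c * (φ b + ε / c)) - C c * b by
        rw [map_mul]; ring] at h2
      have h3 := φle _ _ h2
      have h5 : c * (φ b + ε / c) = c * φ b + ε := by field_simp
      linarith
    · have h1 : b - C (φ b - ε / c) ∈ P := φtot b _ (by nlinarith [div_pos hε hc])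
      have h2 := hPQM.smul_mem hc.le h1
      rw [show C c * (b - C (φ b - ε / c)) = C c * b - C (c * (φ b - ε / c)) by
        rw [map_mul]; ring] at h2
      have h3 := φge _ _ h2
      have h5 : c * (φ b - ε / c) = c * φ b - ε := by field_simp
      linarith
  have φCmul : ∀ (c : ℝ) (b : A n), φ (C c * b) = c * φ b := by
    intro c b
    rcases lt_trichotomy c 0 with h | h | h
    · have h1 : φ (C (-c) * b) = -c * φ b := φsmul (-c) b (by linarith)
      have h2 : (C c : A n) * b = -(C (-c) * b) := by rw [map_neg]; ring
      rw [h2, φneg, h1]; ring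
    · subst h; simp [φzero]
    · exact φsmul c b h
  have φmulzero : ∀ (b c : A n), φ (c * (b - C (φ b))) = 0 := by
    have main : ∀ (b c : A n), 0 ≤ φ (c * (b - C (φ b))) := by
      intro b c
      set β := φ b with hβ
      set sp : A n := (C 2⁻¹ * (c + 1)) ^ 2 with hsp
      set sm : A n := (C 2⁻¹ * (c - 1)) ^ 2 with hsm
      set K := φ (sp + sm) with hK
      have hKnn : 0 ≤ K := φP _ (hPQM.add_mem (hPQM.sq_mem _) (hPQM.sq_mem _))
      have hεstep : ∀ ε : ℝ, 0 < ε → 0 ≤ φ (c * (b - C β)) + ε * K := by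
        intro ε hε
        have m1 : b - C (β - ε) ∈ P := φtot b _ (by linarith)
        have m2 : C (β + ε) - b ∈ P := φmem b _ (by linarith)
        have t1 : sp * (b - C (β - ε)) ∈ P := hPQM.sq_mul_mem _ m1
        have t2 : sm * (C (β + ε) - b) ∈ P := hPQM.sq_mul_mem _ m2
        have hsum := hPQM.add_mem t1 t2
        have hid : sp * (b - C (β - ε)) + sm * (C (β + ε) - b)
            = c * (b - C β) + C ε * (sp + sm) := by
          rw [hsp, hsm, map_sub, map_add]
          linear_combination ((2 * (C 2⁻¹ : A n) + 1) * c * (b - C β)) * (half_mul_two (n := n))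
        rw [hid] at hsum
        have := φP _ hsum
        rwa [φadd, φCmul] at this
      by_contra hneg
      push_neg at hneg
      have hK1 : (0:ℝ) < K + 1 := by linarith
      have hεpos : 0 < -φ (c * (b - C β)) / (K + 1) := div_pos (by linarith) hK1
      have h6 := hεstep _ hεpos
      have h7 : (φ (c * (b - C β)) + -φ (c * (b - C β)) / (K + 1) * K) * (K + 1)
          = φ (c * (b - C β)) := by field_simp; ring
      nlinarith
    intro b c
    have h1 := main b c
    have h2 := main b (-c)
    rw [show (-c) * (b - C (φ b)) = -(c * (b - C (φ b))) by ring, φneg] at h2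
    linarith
  have φmul : ∀ b c : A n, φ (b * c) = φ b * φ c := by
    intro b c
    have h1 : b * c = c * (b - C (φ b)) + C (φ b) * c := by ring
    rw [h1, φadd, φmulzero, φCmul]
    ring
  refine ⟨fun i => φ (X i), fun p hp => ?_⟩
  have heval : ∀ p : A n, eval (fun i => φ (X i)) p = φ p := by
    intro p
    induction p using MvPolynomial.induction_on with
    | C a => simp [φC]
    | add p q hp hq => rw [map_add, φadd, hp, hq]
    | mul_X p i hp => rw [map_mul, φmul, hp]; simp
  rw [heval]
  exact φP p hp

end Putinar
open Putinar in
set_option maxHeartbeats 1000000 in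
/-- **Putinar's Positivstellensatz.** If `Q_G` is archimedean and `f > 0` on
`S_G = {x | ∀ g ∈ G, g(x) ≥ 0}`, then `f ∈ Q_G`. -/
theorem stmt15 (n : ℕ) (G : Set (MvPolynomial (Fin n) ℝ)) (f : MvPolynomial (Fin n) ℝ)
    (harch : ∀ p : MvPolynomial (Fin n) ℝ,
      ∃ N : ℕ, InQ n G ((N : MvPolynomial (Fin n) ℝ) - p ^ 2))
    (hpos : ∀ x : Fin n → ℝ, (∀ g ∈ G, 0 ≤ MvPolynomial.eval x g) → 0 < MvPolynomial.eval x f) :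
    InQ n G f := by
  classical
  have harch' := arch' harch
  rw [inQ_iff_mem_Qmod]
  set P₀ : Set (A n) := genQM (Qmod G) (-f) with hP₀def
  by_cases hP₀ : (-1 : A n) ∈ P₀
  · -- the generated module is improper: the key archimedean lemma applies
    obtain ⟨m, hm, s, hs, heq⟩ := hP₀
    have hsf : s * f = 1 + m := by linear_combination heq
    exact key_lemma harch' hs hm hsf
  · -- Zorn: extend P₀ to a maximal proper quadratic module P
    exfalso
    set 𝒮 : Set (Set (A n)) := {Q | IsQM Q ∧ P₀ ⊆ Q ∧ (-1 : A n) ∉ Q} with h𝒮def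
    have hP₀QM : IsQM P₀ := isQM_genQM (isQM_Qmod G) (-f)
    have hP₀𝒮 : P₀ ∈ 𝒮 := ⟨hP₀QM, le_refl _, hP₀⟩
    obtain ⟨P, hP₀P, hPmax⟩ := zorn_subset_nonempty 𝒮 (by
      intro c hc𝒮 hchain hcne
      refine ⟨⋃₀ c, ⟨?_, ?_, ?_⟩, fun s hs => Set.subset_sUnion_of_mem hs⟩
      · constructor
        · rintro a b ⟨Q₁, hQ₁, ha⟩ ⟨Q₂, hQ₂, hb⟩
          rcases hchain.total hQ₁ hQ₂ with h | h
          · exact ⟨Q₂, hQ₂, (hc𝒮 hQ₂).1.add_mem (h ha) hb⟩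
          · exact ⟨Q₁, hQ₁, (hc𝒮 hQ₁).1.add_mem ha (h hb)⟩
        · rintro q a ⟨Q₁, hQ₁, ha⟩
          exact ⟨Q₁, hQ₁, (hc𝒮 hQ₁).1.sq_mul_mem q ha⟩
        · obtain ⟨Q₁, hQ₁⟩ := hcne
          exact ⟨Q₁, hQ₁, (hc𝒮 hQ₁).1.one_mem⟩
      · obtain ⟨Q₁, hQ₁⟩ := hcne
        exact le_trans (hc𝒮 hQ₁).2.1 (Set.subset_sUnion_of_mem hQ₁)
      · rintro ⟨Q₁, hQ₁, hn1⟩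
        exact (hc𝒮 hQ₁).2.2 hn1) P₀ hP₀𝒮
    obtain ⟨hPQM, hP₀subP, hn1⟩ := hPmax.prop
    -- totality of the maximal P
    have htot : ∀ b : A n, b ∈ P ∨ -b ∈ P := by
      intro b
      by_contra hcon
      push_neg at hcon
      obtain ⟨hb, hnb⟩ := hcon
      have key : ∀ c : A n, c ∉ P → (-1 : A n) ∈ genQM P c := by
        intro c hc
        by_contra hq
        have hmem𝒮 : genQM P c ∈ 𝒮 :=
          ⟨isQM_genQM hPQM c, le_trans hP₀subP (subset_genQM c), hq⟩
        have := hPmax.le_of_ge hmem𝒮 (subset_genQM c)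
        exact hc (this (mem_genQM_self hPQM c))
      obtain ⟨m, hm, s, hs, h1⟩ := key b hb
      obtain ⟨m', hm', s', hs', h2⟩ := key (-b) hnb
      have hss : -(s + s') = s' * m + s * m' := by linear_combination s' * h1 + s * h2
      have hmem1 : s' * m + s * m' ∈ P :=
        hPQM.add_mem (hPQM.sos_mul_mem hs' hm) (hPQM.sos_mul_mem hs hm')
      have hu : -(s + s') ∈ P := hss ▸ hmem1
      have hnegs : -s ∈ P := by
        have h3 := hPQM.add_mem hu (hPQM.sos_mem hs')
        rwa [show -(s + s') + s' = -s by ring] at h3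
      have hsP : s ∈ P := hPQM.sos_mem hs
      -- the support is an ideal, so s * b ∈ P
      have hsb : s * b ∈ P := by
        have t1 : (C 2⁻¹ * (b + 1)) ^ 2 * s ∈ P := hPQM.sq_mul_mem _ hsP
        have t2 : (C 2⁻¹ * (b - 1)) ^ 2 * (-s) ∈ P := hPQM.sq_mul_mem _ hnegs
        have t3 := hPQM.add_mem t1 t2
        rwa [show (C 2⁻¹ * (b + 1)) ^ 2 * s + (C 2⁻¹ * (b - 1)) ^ 2 * (-s) = s * b by
          linear_combination ((2 * (C 2⁻¹ : A n) + 1) * s * b) * (half_mul_two (n := n))] at t3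
      have h4 := hPQM.add_mem hm hsb
      rw [← h1] at h4
      exact hn1 h4
    -- P is archimedean
    have harchP : ∀ p : A n, ∃ r : ℝ, C r - p ∈ P := by
      intro p
      obtain ⟨r, hr⟩ := harch' p
      exact ⟨r, hP₀subP (subset_genQM _ hr)⟩
    -- extract a point
    obtain ⟨x, hx⟩ := exists_point hPQM hn1 htot harchP
    have hxS : ∀ g ∈ G, 0 ≤ eval x g := fun g hg =>
      hx g (hP₀subP (subset_genQM _ (G_subset_Qmod G hg)))
    have hfx : 0 < eval x f := hpos x hxS
    have hnf : (0:ℝ) ≤ eval x (-f) := hx (-f) (hP₀subP (mem_genQM_self (isQM_Qmod G) (-f)))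
    rw [map_neg] at hnf
    linarith
end

section
/- (Brumfiel) Let R be a commutative ℚ-algebra and Q ⊆ R a quadratic module. Then the ring of bounded elements H_Q(R) = {a ∈ R : ∃N ∈ ℕ, N − a² ∈ Q} is integrally closed in R. -/
set_option linter.unusedSectionVars false
set_option maxHeartbeats 1000000

section BrumfielAux
variable {R : Type*} [CommRing R] [Algebra ℚ R] {Q : Set R}

lemma bq_zero (h1 : (1:R) ∈ Q) (hsq : ∀ a : R, ∀ q ∈ Q, a ^ 2 * q ∈ Q) : (0:R) ∈ Q := by
  simpa using hsq 0 1 h1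

lemma bq_sum (h1 : (1:R) ∈ Q) (hadd : ∀ q ∈ Q, ∀ q' ∈ Q, q + q' ∈ Q)
    (hsq : ∀ a : R, ∀ q ∈ Q, a ^ 2 * q ∈ Q)
    {ι : Type*} (s : Finset ι) (f : ι → R) (hf : ∀ i ∈ s, f i ∈ Q) :
    ∑ i ∈ s, f i ∈ Q :=
  Finset.sum_induction f (· ∈ Q) (fun a b ha hb => hadd a ha b hb) (bq_zero h1 hsq) hf

lemma bq_nat (h1 : (1:R) ∈ Q) (hadd : ∀ q ∈ Q, ∀ q' ∈ Q, q + q' ∈ Q)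
    (hsq : ∀ a : R, ∀ q ∈ Q, a ^ 2 * q ∈ Q) (n : ℕ) {q : R} (hq : q ∈ Q) :
    (n : R) * q ∈ Q := by
  induction n with
  | zero => simpa using bq_zero h1 hsq
  | succ n ih =>
      have : ((n+1 : ℕ) : R) * q = (n:R)*q + q := by push_cast; ring
      rw [this]; exact hadd _ ih _ hq

lemma bq_rat (h1 : (1:R) ∈ Q) (hadd : ∀ q ∈ Q, ∀ q' ∈ Q, q + q' ∈ Q)
    (hsq : ∀ a : R, ∀ q ∈ Q, a ^ 2 * q ∈ Q) {r : ℚ} (hr : 0 ≤ r) {q : R} (hq : q ∈ Q) :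
    algebraMap ℚ R r * q ∈ Q := by
  have hden : ((r.den : ℚ)) ≠ 0 := by exact_mod_cast r.den_ne_zero
  have hnum : ((r.num.toNat : ℤ)) = r.num := Int.toNat_of_nonneg (Rat.num_nonneg.mpr hr)
  have key : ((r.num.toNat * r.den : ℕ) : ℚ) * (1/(r.den:ℚ))^2 = r := by
    have h2 : (r.num : ℚ) = r * r.den := (div_eq_iff hden).mp (Rat.num_div_den r)
    have hnq : ((r.num.toNat : ℚ)) = (r.num : ℚ) := by exact_mod_cast congrArg (fun z : ℤ => (z : ℚ)) hnum
    push_cast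
    rw [hnq, h2]
    field_simp
  have hmap : algebraMap ℚ R r
      = algebraMap ℚ R (1/(r.den:ℚ)) ^ 2 * ((r.num.toNat * r.den : ℕ) : R) := by
    rw [← map_pow, ← map_natCast (algebraMap ℚ R) (r.num.toNat * r.den), ← map_mul]
    rw [mul_comm]
    exact congrArg _ key.symm
  rw [hmap, mul_assoc]
  exact hsq _ _ (bq_nat h1 hadd hsq _ hq)

lemma bq_ratmem (h1 : (1:R) ∈ Q) (hadd : ∀ q ∈ Q, ∀ q' ∈ Q, q + q' ∈ Q)
    (hsq : ∀ a : R, ∀ q ∈ Q, a ^ 2 * q ∈ Q) {r : ℚ} (hr : 0 ≤ r) :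
    algebraMap ℚ R r ∈ Q := by
  simpa using bq_rat h1 hadd hsq hr h1

lemma bq_key (h1 : (1:R) ∈ Q) (hadd : ∀ q ∈ Q, ∀ q' ∈ Q, q + q' ∈ Q)
    (hsq : ∀ a : R, ∀ q ∈ Q, a ^ 2 * q ∈ Q) (b : R) (hb : ∀ q ∈ Q, b * q ∈ Q) :
    ∀ (k : ℕ) (M : Fin k → ℚ), (∀ i, 0 ≤ M i) →
      ((∑ i, algebraMap ℚ R (M i) * b ^ (i:ℕ)) - b ^ k ∈ Q) →
      ∃ N : ℕ, (N : R) - b ∈ Q := by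
  have hbpow : ∀ i : ℕ, b ^ i ∈ Q := by
    intro i
    induction i with
    | zero => simpa using h1
    | succ i ih => rw [pow_succ, mul_comm]; exact hb _ ih
  intro k
  induction k with
  | zero =>
      intro M _ hQ
      simp only [Finset.univ_eq_empty, Finset.sum_empty, pow_zero, zero_sub] at hQ
      refine ⟨1, ?_⟩
      have hnb : -b ∈ Q := by simpa [mul_neg_one] using hb _ hQ
      simpa [sub_eq_add_neg] using hadd 1 h1 _ hnb
  | succ k IH =>
      match k, IH with
      | 0, _ =>
          intro M _ hQ
          have hQ' : (algebraMap ℚ R) (M 0) - b ∈ Q := by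
            simpa using hQ
          refine ⟨⌈M 0⌉₊, ?_⟩
          have h1' : algebraMap ℚ R ((⌈M 0⌉₊ : ℚ) - M 0) ∈ Q :=
            bq_ratmem h1 hadd hsq (by simpa using Nat.le_ceil (M 0))
          have := hadd _ h1' _ hQ'
          have heq : algebraMap ℚ R ((⌈M 0⌉₊ : ℚ) - M 0) + (algebraMap ℚ R (M 0) - b)
              = ((⌈M 0⌉₊ : ℕ) : R) - b := by
            rw [map_sub, map_natCast]; ring
          rwa [heq] at this
      | j + 1, IH =>
          intro M hM hQ
          set φ := algebraMap ℚ R with hφ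
          set m : ℚ := M (Fin.last (j+1)) with hmdef
          have hm : 0 ≤ m := hM _
          have hm1 : (m + 1) ≠ 0 := by positivity
          set t : ℚ := 1/(m+1) with htdef
          set s : ℚ := (m+1)/2 with hsdef
          set c : ℚ := 1 - t^2 * m with hcdef
          have hc : 0 < c := by
            rw [hcdef, htdef]
            rw [div_pow, one_pow, div_mul_eq_mul_div, one_mul, sub_pos,
              div_lt_one (by positivity)]
            nlinarith
          have hts : t * s * 2 = 1 := by
            rw [htdef, hsdef]; field_simp
          -- the new coefficients
          refine IH (fun i => (t^2 * M i.castSucc)/c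
              + (if i = Fin.last j then s^2/c else 0)) (fun i => ?_) ?_
          · have h1' : 0 ≤ (t^2 * M i.castSucc)/c :=
              div_nonneg (mul_nonneg (sq_nonneg t) (hM _)) hc.le
            split
            · exact add_nonneg h1' (div_nonneg (sq_nonneg s) hc.le)
            · simpa using h1'
          · -- main membership
            show (∑ i : Fin (j+1), φ (t^2*M i.castSucc/c
                + if i = Fin.last j then s^2/c else 0) * b ^ (i:ℕ)) - b^(j+1) ∈ Q
            have step1 : (∑ i : Fin (j+1), φ (t^2*M i.castSucc/c
                  + if i = Fin.last j then s^2/c else 0) * b ^ (i:ℕ))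
                = (∑ i : Fin (j+1), φ (t^2 * M i.castSucc / c) * b ^ (i:ℕ))
                  + φ (s^2/c) * b^j := by
              have e1 : ∀ i : Fin (j+1), φ (t^2*M i.castSucc/c
                    + if i = Fin.last j then s^2/c else 0) * b ^ (i:ℕ)
                  = φ (t^2 * M i.castSucc / c) * b ^ (i:ℕ)
                    + (if i = Fin.last j then φ (s^2/c) * b ^ (i:ℕ) else 0) := by
                intro i
                by_cases h : i = Fin.last j <;> simp [h, map_add, add_mul]
              rw [Finset.sum_congr rfl fun i _ => e1 i, Finset.sum_add_distrib,
                Finset.sum_ite_eq' Finset.univ (Fin.last j)]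
              simp
            have step2 : φ c * (∑ i : Fin (j+1), φ (t^2 * M i.castSucc / c) * b ^ (i:ℕ))
                = φ t ^ 2 * ∑ i : Fin (j+1), φ (M i.castSucc) * b ^ (i:ℕ) := by
              rw [← map_pow, Finset.mul_sum, Finset.mul_sum]
              refine Finset.sum_congr rfl fun i _ => ?_
              rw [← mul_assoc, ← mul_assoc, ← map_mul, ← map_mul]
              congr 2
              field_simp
            have step3 : (∑ i : Fin (j+1+1), φ (M i) * b ^ (i:ℕ))
                = (∑ i : Fin (j+1), φ (M i.castSucc) * b ^ (i:ℕ)) + φ m * b^(j+1) := by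
              rw [Fin.sum_univ_castSucc]
              simp [hmdef]
            have f1 : φ c * φ (s^2/c) = φ s ^ 2 := by
              rw [← map_mul, ← map_pow]
              congr 1
              field_simp
            have f2 : φ c = 1 - φ t ^ 2 * φ m := by
              rw [hcdef, map_sub, map_one, map_mul, map_pow]
            have f3 : φ t * φ s * 2 = 1 := by
              have h := congrArg φ hts
              rw [map_mul, map_mul, map_one, map_ofNat] at h
              exact h
            have hXY : φ c * ((∑ i : Fin (j+1), φ (t^2*M i.castSucc/c
                  + if i = Fin.last j then s^2/c else 0) * b ^ (i:ℕ)) - b^(j+1))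
                = φ t ^ 2 * ((∑ i : Fin (j+1+1), φ (M i) * b ^ (i:ℕ)) - b^(j+1+1))
                  + (φ t * b - φ s)^2 * b^j := by
              rw [step1, step3, pow_succ b (j+1), pow_succ b j]
              linear_combination step2 + b^j * f1 - (b^j*b) * f2 + (b^j*b) * f3
            have hY : φ t ^ 2 * ((∑ i : Fin (j+1+1), φ (M i) * b ^ (i:ℕ)) - b^(j+1+1))
                  + (φ t * b - φ s)^2 * b^j ∈ Q :=
              hadd _ (hsq (φ t) _ hQ) _ (hsq _ _ (hbpow j))
            rw [← hXY] at hY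
            have hfin : φ (1/c) * (φ c * ((∑ i : Fin (j+1), φ (t^2*M i.castSucc/c
                  + if i = Fin.last j then s^2/c else 0) * b ^ (i:ℕ)) - b^(j+1)))
                = (∑ i : Fin (j+1), φ (t^2*M i.castSucc/c
                  + if i = Fin.last j then s^2/c else 0) * b ^ (i:ℕ)) - b^(j+1) := by
              rw [← mul_assoc, ← map_mul, one_div, inv_mul_cancel₀ hc.ne', map_one, one_mul]
            rw [← hfin]
            exact bq_rat h1 hadd hsq (by positivity) hY

end BrumfielAux

/-- **Brumfiel's lemma.** Let `R` be a commutative `ℚ`-algebra and `Q ⊆ R` a quadratic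
module. Then the ring of bounded elements `H_Q(R) = {a | ∃ N, N − a² ∈ Q}` is integrally
closed in `R`: every `a ∈ R` satisfying a monic polynomial equation with coefficients in
`H_Q(R)` lies in `H_Q(R)`. -/
theorem stmt18 (R : Type*) [CommRing R] [Algebra ℚ R] (Q : Set R)
    (h1 : (1 : R) ∈ Q)
    (hadd : ∀ q ∈ Q, ∀ q' ∈ Q, q + q' ∈ Q)
    (hsq : ∀ a : R, ∀ q ∈ Q, a ^ 2 * q ∈ Q)
    (a : R)
    (hint : ∃ (k : ℕ) (c : Fin k → R), 0 < k ∧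
      (∀ i, ∃ N : ℕ, (N : R) - (c i) ^ 2 ∈ Q) ∧
      a ^ k + ∑ i : Fin k, c i * a ^ (i : ℕ) = 0) :
    ∃ N : ℕ, (N : R) - a ^ 2 ∈ Q := by
  obtain ⟨k, c, -, hc, heq⟩ := hint
  choose Nc hNc using hc
  set φ := algebraMap ℚ R with hφ
  -- notation
  set x : Fin k → R := fun i => c i * a ^ (i:ℕ) with hx
  have hS1 : ∑ i, x i = -a^k := eq_neg_of_add_eq_zero_right heq
  have hsq1 : (∑ i, x i)^2 = (a^2)^k := by
    rw [hS1]; ring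
  -- Cauchy-Schwarz style inequality
  have hdiag : ∀ i : Fin k, ∑ i' : Fin k, (x i - x i')^2
      = (k:R) * x i ^ 2 - 2 * x i * (∑ i', x i') + ∑ i', x i' ^ 2 := by
    intro i
    simp only [sub_sq]
    rw [Finset.sum_add_distrib, Finset.sum_sub_distrib, Finset.sum_const,
      Finset.card_univ, Fintype.card_fin, ← Finset.mul_sum, nsmul_eq_mul]
  have hdiag2 : ∑ i : Fin k, ∑ i' : Fin k, (x i - x i')^2
      = 2 * ((k:R) * (∑ i, x i ^ 2) - (∑ i, x i)^2) := by
    rw [Finset.sum_congr rfl fun i _ => hdiag i, Finset.sum_add_distrib,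
      Finset.sum_sub_distrib, Finset.sum_const, Finset.card_univ, Fintype.card_fin,
      ← Finset.mul_sum, ← Finset.sum_mul, ← Finset.mul_sum, nsmul_eq_mul]
    ring
  have hCS : (k:R) * (∑ i, x i ^ 2) - (∑ i, x i)^2 ∈ Q := by
    have hmem : ∑ i : Fin k, ∑ i' : Fin k, (x i - x i')^2 ∈ Q := by
      refine bq_sum h1 hadd hsq _ _ fun i _ => ?_
      refine bq_sum h1 hadd hsq _ _ fun i' _ => ?_
      simpa using hsq (x i - x i') 1 h1
    have h2 : φ (1/2) * (∑ i : Fin k, ∑ i' : Fin k, (x i - x i')^2)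
        = (k:R) * (∑ i, x i ^ 2) - (∑ i, x i)^2 := by
      rw [hdiag2, ← mul_assoc]
      have : φ (1/2) * 2 = 1 := by
        rw [show (2:R) = φ 2 from (map_ofNat φ 2).symm, ← map_mul]
        norm_num
      rw [this, one_mul]
    rw [← h2]
    exact bq_rat h1 hadd hsq (by norm_num) hmem
  -- the second part: ∑ k (N_i - c_i^2) a^{2i} ∈ Q
  have hB : ∑ i : Fin k, (k:R) * ((a^(i:ℕ))^2 * ((Nc i : R) - (c i)^2)) ∈ Q := by
    refine bq_sum h1 hadd hsq _ _ fun i _ => ?_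
    exact bq_nat h1 hadd hsq k (hsq _ _ (hNc i))
  -- combine
  have hkey_in : (∑ i : Fin k, φ (((k * Nc i : ℕ) : ℚ)) * (a^2) ^ (i:ℕ)) - (a^2)^k ∈ Q := by
    have key_eq : (∑ i : Fin k, φ (((k * Nc i : ℕ) : ℚ)) * (a^2) ^ (i:ℕ)) - (a^2)^k
        = ((k:R) * (∑ i, x i ^ 2) - (∑ i, x i)^2)
          + ∑ i : Fin k, (k:R) * ((a^(i:ℕ))^2 * ((Nc i : R) - (c i)^2)) := by
      have hterm : ∀ i : Fin k, φ (((k * Nc i : ℕ) : ℚ)) * (a^2) ^ (i:ℕ)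
          = (k:R) * x i ^ 2 + (k:R) * ((a^(i:ℕ))^2 * ((Nc i : R) - (c i)^2)) := by
        intro i
        rw [map_natCast, hx]
        push_cast
        ring
      rw [Finset.sum_congr rfl fun i _ => hterm i, Finset.sum_add_distrib,
        ← Finset.mul_sum, ← hsq1]
      ring
    rw [key_eq]
    exact hadd _ hCS _ hB
  have := bq_key h1 hadd hsq (a^2) (hsq a) k (fun i => ((k * Nc i : ℕ) : ℚ))
    (fun i => by positivity) hkey_in
  exact this
end
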